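/- arXiv:0904.1786 — 6 statements merged into one kernel-verified Lean document; each statement's English description precedes it below -/
import Mathlib

section
/- For any elements x, y of a Coxeter group W, the set {uv : u ≤ x, v ≤ y} (where ≤ is the Bruhat order) contains a unique maximal element. -/
/-- The Bruhat order on a Coxeter group, via the subword property: `x ≤ y` iff some
reduced word for `y` has a subword whose product is `x`. -/
def CoxeterSystem.bruhatLE {B W : Type*} [Group W] {M : CoxeterMatrix B}
    (cs : CoxeterSystem M W) (x y : W) : Prop :=
  ∃ ω ω' : List B, cs.IsReduced ω ∧ cs.wordProd ω = y ∧
    List.Sublist ω' ω ∧ cs.wordProd ω' = x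

/-- The set of products `u * v` with `u ≤ x` and `v ≤ y` in the Bruhat order. -/
def CoxeterSystem.prodSet {B W : Type*} [Group W] {M : CoxeterMatrix B}
    (cs : CoxeterSystem M W) (x y : W) : Set W :=
  {w | ∃ u v : W, cs.bruhatLE u x ∧ cs.bruhatLE v y ∧ w = u * v}

namespace DemAux

open CoxeterSystem List

variable {B W : Type*} [Group W] {M : CoxeterMatrix B} (cs : CoxeterSystem M W)

local prefix:100 "s" => cs.simple
local prefix:100 "π" => cs.wordProd
local prefix:100 "ℓ" => cs.length

attribute [local instance] Classical.propDecidable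

theorem conj_eq_iff (cs : CoxeterSystem M W) (g t a : W) : g * t * g⁻¹ = a ↔ t = g⁻¹ * a * g := by
  constructor
  · intro h; rw [← h]; group
  · intro h; rw [h]; group

theorem simple_conj_eq_iff (j : B) (X a : W) : s j * X * s j = a ↔ X = s j * a * s j := by
  constructor
  · intro h; rw [← h]; simp [mul_assoc, cs.simple_mul_simple_self]
  · intro h; rw [h]; simp [← mul_assoc, cs.simple_mul_simple_self,
      cs.simple_mul_simple_cancel_left]

theorem pow_conj (i j : B) : ∀ n : ℕ, s j * (s i * s j)^n * s j = ((s i * s j)^n)⁻¹ := by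
  have hbase : s j * (s i * s j) * s j = (s i * s j)⁻¹ := by
    simp [mul_assoc, cs.simple_mul_simple_self, mul_inv_rev, cs.inv_simple]
  intro n
  induction n with
  | zero => simp [cs.simple_mul_simple_self]
  | succ n ih =>
    have : s j * (s i * s j)^(n+1) * s j
        = (s j * (s i * s j)^n * s j) * (s j * (s i * s j) * s j) := by
      simp [pow_succ, mul_assoc, cs.simple_mul_simple_self]
    rw [this, ih, hbase, ← mul_inv_rev, ← pow_succ']

theorem inv_conj (i j : B) (k : ℕ) :
    ((s i * s j)^k)⁻¹ * s j * (s i * s j)^k = s j * (s i * s j)^(2*k) := by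
  have h := pow_conj cs i j k
  have h2 : ((s i * s j)^k)⁻¹ * s j * (s i * s j)^k
      = (s j * (s i * s j)^k * s j) * s j * (s i * s j)^k := by rw [h]
  rw [h2]
  simp [mul_assoc, cs.simple_mul_simple_self, ← pow_add, two_mul]

/-- The basic involution used for the reflection representation on `W × ℤˣ`. -/
noncomputable def sig (i : B) : Equiv.Perm (W × ℤˣ) :=
  Function.Involutive.toPerm
    (fun p => (s i * p.1 * s i, if p.1 = s i then -p.2 else p.2)) (by
      intro p
      obtain ⟨t, e⟩ := p
      have h1 : s i * (s i * t * s i) * s i = t := by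
        simp [← mul_assoc, cs.simple_mul_simple_self]
      have h2 : (s i * t * s i = s i) ↔ t = s i := by
        rw [simple_conj_eq_iff cs, cs.simple_mul_simple_self, one_mul]
      by_cases hp : t = s i
      · simp [hp, h2, h1, cs.simple_mul_simple_self]
      · simp [hp, h2, h1])

@[simp] theorem sig_apply (i : B) (t : W) (e : ℤˣ) :
    sig cs i (t, e) = (s i * t * s i, if t = s i then -e else e) := rfl

theorem sig_pow_formula (i j : B) (k : ℕ) (t : W) (e : ℤˣ) :
    ((sig cs i * sig cs j) ^ k) (t, e) =
      ((s i * s j) ^ k * t * ((s i * s j) ^ k)⁻¹,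
        e * (-1) ^ ((List.range (2 * k)).countP
          (fun r => decide (t = s j * (s i * s j) ^ r)))) := by
  induction k with
  | zero => simp
  | succ k ih =>
    have hpow : (sig cs i * sig cs j) ^ (k + 1) =
        (sig cs i * sig cs j) * (sig cs i * sig cs j) ^ k := pow_succ' _ _
    rw [hpow]
    have happ : ((sig cs i * sig cs j) * (sig cs i * sig cs j) ^ k) (t, e)
        = sig cs i (sig cs j (((sig cs i * sig cs j) ^ k) (t, e))) := rfl
    rw [happ, ih]
    simp only [sig_apply]
    -- condition rewrites
    have e1 : ((s i * s j)^k * t * ((s i * s j)^k)⁻¹ = s j) ↔ t = s j * (s i * s j)^(2*k) := by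
      rw [conj_eq_iff cs, inv_conj cs]
    have e2 : (s j * ((s i * s j)^k * t * ((s i * s j)^k)⁻¹) * s j = s i)
        ↔ t = s j * (s i * s j)^(2*k+1) := by
      rw [simple_conj_eq_iff cs, conj_eq_iff cs]
      have : ((s i * s j)^k)⁻¹ * (s j * s i * s j) * (s i * s j)^k
          = s j * (s i * s j)^(2*k+1) := by
        calc ((s i * s j)^k)⁻¹ * (s j * s i * s j) * (s i * s j)^k
            = (((s i * s j)^k)⁻¹ * s j) * ((s i * s j) * (s i * s j)^k) := by
              simp [mul_assoc]
          _ = (((s i * s j)^k)⁻¹ * s j) * ((s i * s j)^k * (s i * s j)) := by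
              rw [← pow_succ', pow_succ]
          _ = (((s i * s j)^k)⁻¹ * s j * (s i * s j)^k) * (s i * s j) := by
              simp [mul_assoc]
          _ = (s j * (s i * s j)^(2*k)) * (s i * s j) := by rw [inv_conj cs]
          _ = s j * (s i * s j)^(2*k+1) := by rw [mul_assoc, ← pow_succ]
      rw [this]
    -- counting
    have hrange : 2 * (k+1) = (2*k) + 1 + 1 := by ring
    rw [hrange, List.range_succ, List.range_succ, List.countP_append, List.countP_append]
    simp only [List.countP_cons, List.countP_nil]
    refine Prod.ext ?_ ?_
    · simp [pow_succ', mul_assoc, mul_inv_rev, cs.inv_simple]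
    · simp only [e1, e2, List.countP_cons, List.countP_nil, decide_eq_true_eq]
      split_ifs <;> simp [pow_add, mul_neg, neg_neg, neg_mul, mul_one, mul_assoc]

theorem sig_liftable : M.IsLiftable (fun i => sig cs i) := by
  intro i j
  rcases eq_or_ne (M i j) 0 with h0 | h0
  · simp [h0]
  · apply Equiv.ext
    rintro ⟨t, e⟩
    rw [sig_pow_formula]
    have hp : (s i * s j) ^ M i j = 1 := cs.simple_mul_simple_pow i j
    rw [hp]
    have hcnt : (List.range (2 * M i j)).countP
        (fun r => decide (t = s j * (s i * s j) ^ r))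
        = 2 * (List.range (M i j)).countP (fun r => decide (t = s j * (s i * s j) ^ r)) := by
      rw [two_mul (M i j), List.range_add, List.countP_append, List.countP_map]
      have : ((fun r => decide (t = s j * (s i * s j) ^ r)) ∘ (fun r => M i j + r))
          = fun r => decide (t = s j * (s i * s j) ^ r) := by
        funext r
        simp [Function.comp, pow_add, hp]
      rw [this, two_mul]
    rw [hcnt]
    have : ((-1 : ℤˣ)) ^ (2 * (List.range (M i j)).countP
        (fun r => decide (t = s j * (s i * s j) ^ r))) = 1 := by
      rw [pow_mul]
      norm_num
    rw [this]
    simp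

/-- The reflection representation on `W × ℤˣ`. -/
noncomputable def phi : W →* Equiv.Perm (W × ℤˣ) :=
  cs.lift ⟨fun i => sig cs i, sig_liftable cs⟩

theorem phi_simple (i : B) : phi cs (s i) = sig cs i :=
  cs.lift_apply_simple (sig_liftable cs) i

theorem phi_wordProd (ω : List B) (t : W) (e : ℤˣ) :
    phi cs (π ω) (t, e) = (π ω * t * (π ω)⁻¹,
      e * (-1) ^ ((cs.rightInvSeq ω).countP (fun x => decide (x = t)))) := by
  induction ω generalizing e with
  | nil => simp
  | cons i ω ih =>
    have hw : π (i :: ω) = s i * π ω := cs.wordProd_cons i ω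
    have happ : phi cs (π (i :: ω)) (t, e) = phi cs (s i) (phi cs (π ω) (t, e)) := by
      rw [hw, map_mul]; rfl
    rw [happ, ih, phi_simple, sig_apply]
    have hris : cs.rightInvSeq (i :: ω) = ((π ω)⁻¹ * s i * π ω) :: cs.rightInvSeq ω := rfl
    rw [hris, List.countP_cons]
    have hcond : (π ω * t * (π ω)⁻¹ = s i) ↔ ((π ω)⁻¹ * s i * π ω = t) := by
      rw [conj_eq_iff cs]
      exact eq_comm
    refine Prod.ext ?_ ?_
    · simp [hw, mul_assoc, mul_inv_rev, cs.inv_simple]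
    · by_cases hc : (π ω)⁻¹ * s i * π ω = t
      · rw [if_pos (hcond.2 hc), if_pos (by simpa using hc)]
        simp [pow_add, mul_assoc]
      · rw [if_neg (fun hx => hc (hcond.1 hx)), if_neg (by simpa using hc)]
        simp

/-- The sign of `w` at `t`. -/
noncomputable def sgn (w t : W) : ℤˣ := (phi cs w (t, 1)).2

theorem phi_fst (w t : W) (e : ℤˣ) : (phi cs w (t, e)).1 = w * t * w⁻¹ := by
  obtain ⟨ω, rfl⟩ := cs.wordProd_surjective w
  rw [phi_wordProd]

theorem phi_snd (w t : W) (e : ℤˣ) : (phi cs w (t, e)).2 = e * sgn cs w t := by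
  obtain ⟨ω, rfl⟩ := cs.wordProd_surjective w
  rw [phi_wordProd]
  have : sgn cs (π ω) t
      = 1 * (-1) ^ ((cs.rightInvSeq ω).countP (fun x => decide (x = t))) := by
    rw [sgn, phi_wordProd]
  rw [this]
  simp

theorem mem_ris_of_sgn_neg {ω : List B} {t : W} (h : sgn cs (π ω) t = -1) :
    t ∈ cs.rightInvSeq ω := by
  by_contra hmem
  have hcnt : (cs.rightInvSeq ω).countP (fun x => decide (x = t)) = 0 := by
    rw [List.countP_eq_zero]
    intro a ha
    simp only [decide_eq_true_eq]
    exact fun h => hmem (h ▸ ha)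
  rw [sgn, phi_wordProd, hcnt] at h
  simp at h

theorem phi_reflection_flip {t : W} (ht : cs.IsReflection t) (e : ℤˣ) :
    phi cs t (t, e) = (t, -e) := by
  obtain ⟨w, i, rfl⟩ := ht
  set t' := w * s i * w⁻¹ with ht'
  have hq1 : (phi cs w⁻¹ (t', e)).1 = s i := by
    rw [phi_fst, ht']
    simp [mul_assoc]
  have hq2 : (phi cs w⁻¹ (t', e)).2 = e * sgn cs w⁻¹ t' := phi_snd cs w⁻¹ t' e
  have hpair : phi cs w⁻¹ (t', e) = (s i, e * sgn cs w⁻¹ t') := by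
    rw [← hq1, ← hq2]
  have hcomp : phi cs w (phi cs w⁻¹ (t', e)) = (t', e) := by
    have : phi cs w (phi cs w⁻¹ (t', e)) = (phi cs w * phi cs w⁻¹) (t', e) := rfl
    rw [this, ← map_mul, mul_inv_cancel, map_one]
    rfl
  rw [hpair] at hcomp
  have hsnd : (e * sgn cs w⁻¹ t') * sgn cs w (s i) = e := by
    have := congrArg Prod.snd hcomp
    rwa [phi_snd] at this
  have hkey : sgn cs w⁻¹ t' * sgn cs w (s i) = 1 := by
    have := hsnd
    rw [mul_assoc] at this
    exact mul_left_cancel (a := e) (by rw [this, mul_one])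
  have hdecomp : phi cs t' (t', e) = phi cs w (phi cs (s i) (phi cs w⁻¹ (t', e))) := by
    rw [ht', map_mul, map_mul, map_inv]
    rfl
  rw [hdecomp, hpair, phi_simple, sig_apply, if_pos rfl]
  have h1 : s i * s i * s i = s i := by simp [cs.simple_mul_simple_self]
  rw [h1]
  refine Prod.ext ?_ ?_
  · rw [phi_fst, ht']
  · rw [phi_snd]
    have : -(e * sgn cs w⁻¹ t') * sgn cs w (s i) = -(e * (sgn cs w⁻¹ t' * sgn cs w (s i))) := by
      rw [neg_mul, mul_assoc]
    rw [this, hkey, mul_one]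

theorem sgn_eq_neg_one_of_descent {t : W} (ht : cs.IsReflection t) {w : W}
    (h : ℓ (w * t) < ℓ w) : sgn cs w t = -1 := by
  have hrel : sgn cs w t = - sgn cs (w * t) t := by
    have hw : w = (w * t) * t := by rw [mul_assoc, ht.mul_self, mul_one]
    have : phi cs w (t, 1) = phi cs (w * t) (phi cs t (t, 1)) := by
      conv_lhs => rw [hw]
      rw [map_mul]
      rfl
    rw [sgn, this, phi_reflection_flip cs ht, phi_snd]
    simp
  rcases Int.units_eq_one_or (sgn cs w t) with h1 | h1
  · exfalso
    rw [h1] at hrel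
    have h2 : sgn cs (w * t) t = -1 := by
      have h3 := hrel.symm
      rwa [neg_eq_iff_eq_neg] at h3
    obtain ⟨ω, hred, hπ⟩ := cs.exists_reduced_word' (w * t)
    rw [hπ] at h2
    have hmem := mem_ris_of_sgn_neg cs h2
    have hinv := cs.isRightInversion_of_mem_rightInvSeq hred hmem
    rw [← hπ] at hinv
    have : ℓ (w * t * t) < ℓ (w * t) := hinv.2
    rw [mul_assoc, ht.mul_self, mul_one] at this
    omega
  · exact h1

/-- Right strong exchange. -/
theorem right_exchange {ω : List B} (hred : cs.IsReduced ω) {t : W}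
    (ht : cs.IsReflection t) (h : ℓ (π ω * t) < ℓ (π ω)) :
    ∃ j, j < ω.length ∧ π ω * t = π (ω.eraseIdx j) := by
  have hsgn := sgn_eq_neg_one_of_descent cs ht h
  have hmem := mem_ris_of_sgn_neg cs hsgn
  obtain ⟨j, hj, hget⟩ := List.mem_iff_getElem.1 hmem
  have hlen : j < ω.length := by
    have := cs.length_rightInvSeq ω
    omega
  refine ⟨j, hlen, ?_⟩
  have hgetD : (cs.rightInvSeq ω).getD j 1 = t := by
    rw [List.getD_eq_getElem _ _ hj, hget]
  rw [← hgetD]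
  exact cs.wordProd_mul_getD_rightInvSeq ω j

/-- Deletion property: every word has a reduced sublist with the same product. -/
theorem isReduced_iff (ω : List B) : cs.IsReduced ω ↔ ℓ (π ω) = ω.length := Iff.rfl

theorem del : ∀ (n : ℕ) (ω : List B), ω.length ≤ n →
    ∃ ω', ω' <+ ω ∧ cs.IsReduced ω' ∧ π ω' = π ω := by
  intro n
  induction n with
  | zero =>
    intro ω h
    have : ω = [] := List.length_eq_zero_iff.mp (Nat.le_zero.mp h)
    subst this
    exact ⟨[], List.Sublist.refl _, by simp [CoxeterSystem.IsReduced], rfl⟩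
  | succ n IHn =>
    intro ω hlen
    by_cases hred : cs.IsReduced ω
    · exact ⟨ω, List.Sublist.refl _, hred, rfl⟩
    · have hne : ω ≠ [] := by rintro rfl; exact hred (by simp [CoxeterSystem.IsReduced])
      have hlen1 : 1 ≤ ω.length := by
        cases ω with
        | nil => exact absurd rfl hne
        | cons a l => simp
      have hex : ∃ k, ¬ cs.IsReduced (ω.take (k+1)) := by
        refine ⟨ω.length - 1, ?_⟩
        have : ω.length - 1 + 1 = ω.length := by omega
        rw [this, List.take_length]
        exact hred
      classical
      let k := Nat.find hex
      have hk : ¬ cs.IsReduced (ω.take (k+1)) := Nat.find_spec hex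
      have hkmin : ∀ m, m < k → cs.IsReduced (ω.take (m+1)) := by
        intro m hm
        by_contra hc
        exact absurd (Nat.find_min' hex hc) (by omega)
      have hkle : k ≤ ω.length - 1 := Nat.find_min' hex (by
        have : ω.length - 1 + 1 = ω.length := by omega
        rw [this, List.take_length]
        exact hred)
      have hklt : k < ω.length := by omega
      have hAred : cs.IsReduced (ω.take k) := by
        rcases Nat.eq_zero_or_pos k with h0 | h0
        · rw [h0]
          simp [CoxeterSystem.IsReduced]
        · have hk1 : k - 1 + 1 = k := by omega
          rw [← hk1]
          exact hkmin (k-1) (by omega)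
      have htake : ω.take (k+1) = ω.take k ++ [ω[k]] := (List.take_concat_get' ω k hklt).symm
      set c := ω[k] with hc
      have hlentake : (ω.take k).length = k := by
        rw [List.length_take]
        omega
      have hlπ : ℓ (π (ω.take k)) = k := by
        conv_rhs => rw [← hlentake]
        exact hAred
      have hdesc : ℓ (π (ω.take k) * s c) < ℓ (π (ω.take k)) := by
        have hπtake : π (ω.take (k+1)) = π (ω.take k) * s c := by
          rw [htake, cs.wordProd_append]
          simp
        rcases cs.length_mul_simple (π (ω.take k)) c with h1 | h1
        · exfalso
          apply hk
          rw [isReduced_iff, hπtake, h1, hlπ, htake]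
          simp [hlentake]
        · omega
      obtain ⟨j, hj, heq⟩ := right_exchange cs hAred (cs.isReflection_simple c) hdesc
      set e := (ω.take k).eraseIdx j ++ ω.drop (k+1) with he
      have heπ : π e = π ω := by
        rw [he, cs.wordProd_append, ← heq]
        have : π (ω.take k) * s c * π (ω.drop (k+1)) = π (ω.take (k+1)) * π (ω.drop (k+1)) := by
          rw [htake, cs.wordProd_append]
          simp [mul_assoc]
        rw [this, ← cs.wordProd_append, List.take_append_drop]
      have hesub : e <+ ω := by
        have h1 : (ω.take k).eraseIdx j <+ ω.take k := List.eraseIdx_sublist _ j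
        have h2 : ω.drop (k+1) <+ c :: ω.drop (k+1) := List.sublist_cons_self _ _
        have h3 : e <+ ω.take k ++ (c :: ω.drop (k+1)) := List.Sublist.append h1 h2
        have h4 : ω.take k ++ (c :: ω.drop (k+1)) = ω := by
          have : c :: ω.drop (k+1) = ω.drop k := (List.drop_eq_getElem_cons hklt).symm
          rw [this, List.take_append_drop]
        rwa [h4] at h3
      have helen : e.length ≤ n := by
        have h1 : ((ω.take k).eraseIdx j).length = k - 1 := by
          rw [List.length_eraseIdx_of_lt hj, hlentake]
        have h2 : (ω.drop (k+1)).length = ω.length - (k+1) := by simp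
        rw [he, List.length_append, h1, h2]
        omega
      obtain ⟨ω', hsub', hred', hπ'⟩ := IHn e helen
      exact ⟨ω', hsub'.trans hesub, hred', by rw [hπ', heπ]⟩

/-- Left exchange + deletion: descent by a reflection gives a reduced sublist. -/
theorem left_descent_subword {b : List B} (hred : cs.IsReduced b) {t : W}
    (ht : cs.IsReflection t) (h : ℓ (t * π b) < ℓ (π b)) :
    ∃ e, e <+ b ∧ cs.IsReduced e ∧ π e = t * π b := by
  have hrev : cs.IsReduced b.reverse := (cs.isReduced_reverse_iff b).mpr hred
  have hπrev : π b.reverse = (π b)⁻¹ := cs.wordProd_reverse b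
  have hlen : ℓ (π b.reverse * t) < ℓ (π b.reverse) := by
    have h1 : (π b.reverse * t)⁻¹ = t * π b := by
      rw [hπrev, mul_inv_rev, inv_inv, ht.inv]
    rw [← cs.length_inv (π b.reverse * t), h1, hπrev, cs.length_inv]
    exact h
  obtain ⟨j, hj, heq⟩ := right_exchange cs hrev ht hlen
  set e0 := ((b.reverse.eraseIdx j).reverse : List B) with he0
  have he0sub : e0 <+ b := by
    have h1 : b.reverse.eraseIdx j <+ b.reverse := List.eraseIdx_sublist _ j
    have h2 := h1.reverse
    rwa [List.reverse_reverse] at h2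
  have he0π : π e0 = t * π b := by
    rw [he0, cs.wordProd_reverse, ← heq, hπrev, mul_inv_rev, inv_inv, ht.inv]
  obtain ⟨e, hesub, hered, heπ⟩ := del cs e0.length e0 le_rfl
  exact ⟨e, hesub.trans he0sub, hered, by rw [heπ, he0π]⟩

/-- The Bruhat order defined by chains of reflections. -/
def lt1 (a b : W) : Prop := ∃ t, cs.IsReflection t ∧ b = t * a ∧ ℓ a < ℓ b

def Ble (a b : W) : Prop := Relation.ReflTransGen (lt1 cs) a b

theorem Ble.rfl {a : W} : Ble cs a a := Relation.ReflTransGen.refl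

theorem ble_length_le {a b : W} (h : Ble cs a b) : ℓ a ≤ ℓ b := by
  induction h with
  | refl => exact le_rfl
  | tail _ h2 ih =>
    obtain ⟨t, _, _, hlen⟩ := h2
    omega

theorem ble_eq_of_length_ge {a b : W} (h : Ble cs a b) (h2 : ℓ b ≤ ℓ a) : a = b := by
  rcases Relation.ReflTransGen.cases_tail h with h1 | ⟨c, hc, t, _, rfl, hlen⟩
  · exact h1.symm
  · have := ble_length_le cs hc
    omega

theorem ble_of_right {a : W} {t : W} (ht : cs.IsReflection t) (hlen : ℓ a < ℓ (a * t)) :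
    Ble cs a (a * t) :=
  Relation.ReflTransGen.single ⟨a * t * a⁻¹, ht.conj a, by group, hlen⟩

theorem ble_simple_right {a : W} {d : B} (hlen : ℓ a < ℓ (a * s d)) :
    Ble cs a (a * s d) := ble_of_right cs (cs.isReflection_simple d) hlen

theorem lt1_inv {a b : W} (h : lt1 cs a b) : lt1 cs a⁻¹ b⁻¹ := by
  obtain ⟨t, ht, rfl, hlen⟩ := h
  refine ⟨a⁻¹ * t * (a⁻¹)⁻¹, ht.conj a⁻¹,
    by simp [mul_inv_rev, ht.inv, mul_assoc], ?_⟩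
  simpa only [cs.length_inv] using hlen

theorem ble_inv {a b : W} (h : Ble cs a b) : Ble cs a⁻¹ b⁻¹ := by
  induction h with
  | refl => exact Ble.rfl cs
  | tail _ h2 ih => exact ih.tail (lt1_inv cs h2)

theorem subword_of_ble {v : W} {a : List B} (ha : cs.IsReduced a) (hπ : π a = v)
    {u : W} (h : Ble cs u v) :
    ∃ b, b <+ a ∧ cs.IsReduced b ∧ π b = u := by
  induction h using Relation.ReflTransGen.head_induction_on with
  | refl => exact ⟨a, List.Sublist.refl _, ha, hπ⟩
  | head hstep _ ih =>
    obtain ⟨t, ht, hc, hlen⟩ := hstep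
    subst hc
    obtain ⟨bc, hbc, hbcred, hbcπ⟩ := ih
    have hlt : ℓ (t * π bc) < ℓ (π bc) := by
      rw [hbcπ, ← mul_assoc, ht.mul_self, one_mul]
      exact hlen
    obtain ⟨e, he, hered, heπ⟩ := left_descent_subword cs hbcred ht hlt
    exact ⟨e, he.trans hbc, hered,
      by rw [heπ, hbcπ, ← mul_assoc, ht.mul_self, one_mul]⟩

theorem sublist_concat_cases {b : List B} {a₀ : List B} {d : B} (hb : b <+ a₀ ++ [d]) :
    (b <+ a₀) ∨ (∃ b₁, b₁ <+ a₀ ∧ b = b₁ ++ [d]) := by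
  rw [List.sublist_append_iff] at hb
  obtain ⟨b₁, b₂, rfl, hb₁, hb₂⟩ := hb
  rcases List.sublist_singleton.mp hb₂ with rfl | rfl
  · left
    simpa using hb₁
  · right
    exact ⟨b₁, hb₁, rfl⟩

theorem triple (q : ℕ) :
    (∀ a : List B, cs.IsReduced a → a.length = q →
      ∀ b, b <+ a → Ble cs (π b) (π a)) ∧
    (∀ v y : W, ∀ d : B, ℓ v = q → Ble cs y v → ℓ (v * s d) < ℓ v →
      Ble cs (y * s d) v) ∧
    (∀ w y : W, ∀ d : B, ℓ w = q → Ble cs y w → ℓ w < ℓ (w * s d) →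
      Ble cs (y * s d) (w * s d)) := by
  induction q using Nat.strong_induction_on with
  | _ q IH =>
  have hSW : ∀ a : List B, cs.IsReduced a → a.length = q →
      ∀ b, b <+ a → Ble cs (π b) (π a) := by
    intro a ha hlen b hb
    rcases List.eq_nil_or_concat a with rfl | ⟨a₀, d, rfl⟩
    · rw [List.sublist_nil.mp hb]
      exact Ble.rfl cs
    · simp only [List.concat_eq_append] at ha hlen hb ⊢
      have hq : a₀.length + 1 = q := by
        rw [← hlen]
        simp
      have ha₀ : cs.IsReduced a₀ := by
        have := ha.take a₀.length
        rwa [List.take_left] at this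
      have hπa : π (a₀ ++ [d]) = π a₀ * s d := by
        rw [cs.wordProd_append]
        simp
      have hla : ℓ (π (a₀ ++ [d])) = q := by
        rw [← hlen]
        exact ha
      have hla₀ : ℓ (π a₀) = a₀.length := ha₀
      have hasc : ℓ (π a₀) < ℓ (π a₀ * s d) := by
        rw [hla₀, ← hπa, hla]
        omega
      have hstep : Ble cs (π a₀) (π (a₀ ++ [d])) := by
        rw [hπa]
        exact ble_simple_right cs hasc
      rcases sublist_concat_cases hb with hb' | ⟨b₁, hb₁, rfl⟩
      · exact ((IH a₀.length (by omega)).1 a₀ ha₀ rfl b hb').trans hstep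
      · have h1 : Ble cs (π b₁) (π a₀) := (IH a₀.length (by omega)).1 a₀ ha₀ rfl b₁ hb₁
        have h3 : Ble cs (π b₁ * s d) (π a₀ * s d) :=
          (IH a₀.length (by omega)).2.2 (π a₀) (π b₁) d hla₀ h1 hasc
        rw [hπa]
        have : π (b₁ ++ [d]) = π b₁ * s d := by
          rw [cs.wordProd_append]
          simp
        rw [this]
        exact h3
  have hZ2 : ∀ v y : W, ∀ d : B, ℓ v = q → Ble cs y v → ℓ (v * s d) < ℓ v →
      Ble cs (y * s d) v := by
    intro v y d hq hle hdesc
    obtain ⟨c, hcred, hcπ⟩ := cs.exists_reduced_word' (v * s d)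
    have hlc : c.length = ℓ (v * s d) := by
      have h := (isReduced_iff cs c).mp hcred
      rw [← hcπ] at h
      exact h.symm
    have hvsd : ℓ (v * s d) + 1 = ℓ v := by
      rcases cs.length_mul_simple v d with h1 | h1 <;> omega
    have hπa : π (c ++ [d]) = v := by
      rw [cs.wordProd_append, ← hcπ]
      simp [mul_assoc, cs.simple_mul_simple_self]
    have hared : cs.IsReduced (c ++ [d]) := by
      rw [isReduced_iff, hπa, List.length_append, hlc]
      simp
      omega
    have halen : (c ++ [d]).length = q := by
      rw [List.length_append, hlc]
      simp
      omega
    obtain ⟨b, hb, hbred, hbπ⟩ := subword_of_ble cs hared hπa hle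
    rcases sublist_concat_cases hb with hb' | ⟨b₁, hb₁, rfl⟩
    · have h1 : π (b ++ [d]) = y * s d := by
        rw [cs.wordProd_append, hbπ]
        simp
      rw [← h1, ← hπa]
      exact hSW (c ++ [d]) hared halen (b ++ [d]) (List.Sublist.append hb' (List.Sublist.refl _))
    · have h1 : y * s d = π b₁ := by
        rw [← hbπ, cs.wordProd_append]
        simp [mul_assoc, cs.simple_mul_simple_self]
      rw [h1, ← hπa]
      exact hSW (c ++ [d]) hared halen b₁ (hb₁.trans (List.sublist_append_left _ _))
  have hZ1 : ∀ w y : W, ∀ d : B, ℓ w = q → Ble cs y w → ℓ w < ℓ (w * s d) →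
      Ble cs (y * s d) (w * s d) := by
    intro w y d hq hle hasc
    by_cases hyd : ℓ (y * s d) < ℓ y
    · have h1 : Ble cs (y * s d) y := by
        have h2 : ℓ (y * s d) < ℓ (y * s d * s d) := by
          rw [mul_assoc, cs.simple_mul_simple_self, mul_one]
          exact hyd
        have h3 := ble_simple_right cs h2
        rwa [mul_assoc, cs.simple_mul_simple_self, mul_one] at h3
      exact h1.trans (hle.trans (ble_simple_right cs hasc))
    · rcases Relation.ReflTransGen.cases_tail hle with heq | ⟨v, hyv, hstep⟩
      · rw [heq]
        exact Ble.rfl cs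
      · obtain ⟨t, ht, rfl, hlt⟩ := hstep
        by_cases hvd : ℓ (v * s d) < ℓ v
        · have h1 : Ble cs (y * s d) v :=
            (IH (ℓ v) (by omega)).2.1 v y d rfl hyv hvd
          exact (h1.tail ⟨t, ht, rfl, hlt⟩).trans (ble_simple_right cs hasc)
        · have hvasc : ℓ v < ℓ (v * s d) := by
            have := cs.length_mul_simple_ne v d
            omega
          have h1 : Ble cs (y * s d) (v * s d) :=
            (IH (ℓ v) (by omega)).2.2 v y d rfl hyv hvasc
          refine h1.tail ⟨t, ht, by rw [mul_assoc], ?_⟩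
          have h2 : ℓ (v * s d) = ℓ v + 1 := by
            rcases cs.length_mul_simple v d with h3 | h3 <;> omega
          omega
  exact ⟨hSW, hZ2, hZ1⟩

theorem SW {a b : List B} (ha : cs.IsReduced a) (hb : b <+ a) : Ble cs (π b) (π a) :=
  (triple cs a.length).1 a ha rfl b hb

theorem Z2 {v y : W} {d : B} (hle : Ble cs y v) (hdesc : ℓ (v * s d) < ℓ v) :
    Ble cs (y * s d) v :=
  (triple cs (ℓ v)).2.1 v y d rfl hle hdesc

theorem Z1 {w y : W} {d : B} (hle : Ble cs y w) (hasc : ℓ w < ℓ (w * s d)) :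
    Ble cs (y * s d) (w * s d) :=
  (triple cs (ℓ w)).2.2 w y d rfl hle hasc

theorem Z3 {v y : W} {d : B} (hle : Ble cs y v) (hdesc : ℓ (v * s d) < ℓ v)
    (hasc : ℓ y < ℓ (y * s d)) : Ble cs y (v * s d) := by
  obtain ⟨c, hcred, hcπ⟩ := cs.exists_reduced_word' (v * s d)
  have hlc : c.length = ℓ (v * s d) := by
    have h := (isReduced_iff cs c).mp hcred
    rw [← hcπ] at h
    exact h.symm
  have hvsd : ℓ (v * s d) + 1 = ℓ v := by
    rcases cs.length_mul_simple v d with h1 | h1 <;> omega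
  have hπa : π (c ++ [d]) = v := by
    rw [cs.wordProd_append, ← hcπ]
    simp [mul_assoc, cs.simple_mul_simple_self]
  have hared : cs.IsReduced (c ++ [d]) := by
    rw [isReduced_iff, hπa, List.length_append, hlc]
    simp
    omega
  obtain ⟨b, hb, hbred, hbπ⟩ := subword_of_ble cs hared hπa hle
  rcases sublist_concat_cases hb with hb' | ⟨b₁, hb₁, rfl⟩
  · rw [← hbπ, hcπ]
    exact SW cs hcred hb'
  · exfalso
    have h1 : y * s d = π b₁ := by
      rw [← hbπ, cs.wordProd_append]
      simp [mul_assoc, cs.simple_mul_simple_self]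
    have h2 : ℓ (y * s d) ≤ b₁.length := by
      rw [h1]
      exact cs.length_wordProd_le b₁
    have h3 : ℓ y = b₁.length + 1 := by
      have := hbred
      rw [isReduced_iff, hbπ] at this
      rw [this, List.length_append]
      simp
    omega

theorem Z1L {w y : W} {d : B} (hle : Ble cs y w) (hasc : ℓ w < ℓ (s d * w)) :
    Ble cs (s d * y) (s d * w) := by
  have h1 : ∀ z : W, (z⁻¹ * s d)⁻¹ = s d * z := by
    intro z
    simp [mul_inv_rev, cs.inv_simple]
  have hasc' : ℓ w⁻¹ < ℓ (w⁻¹ * s d) := by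
    rw [← cs.length_inv (w⁻¹ * s d), h1, cs.length_inv]
    exact hasc
  have h2 := Z1 cs (ble_inv cs hle) hasc'
  have h3 := ble_inv cs h2
  rwa [h1, h1] at h3

theorem Z2L {v y : W} {d : B} (hle : Ble cs y v) (hdesc : ℓ (s d * v) < ℓ v) :
    Ble cs (s d * y) v := by
  have h1 : ∀ z : W, (z⁻¹ * s d)⁻¹ = s d * z := by
    intro z
    simp [mul_inv_rev, cs.inv_simple]
  have hdesc' : ℓ (v⁻¹ * s d) < ℓ v⁻¹ := by
    rw [← cs.length_inv (v⁻¹ * s d), h1, cs.length_inv]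
    exact hdesc
  have h2 := Z2 cs (ble_inv cs hle) hdesc'
  have h3 := ble_inv cs h2
  rwa [h1, inv_inv] at h3

theorem Z3L {v y : W} {d : B} (hle : Ble cs y v) (hdesc : ℓ (s d * v) < ℓ v)
    (hasc : ℓ y < ℓ (s d * y)) : Ble cs y (s d * v) := by
  have h1 : ∀ z : W, (z⁻¹ * s d)⁻¹ = s d * z := by
    intro z
    simp [mul_inv_rev, cs.inv_simple]
  have hdesc' : ℓ (v⁻¹ * s d) < ℓ v⁻¹ := by
    rw [← cs.length_inv (v⁻¹ * s d), h1, cs.length_inv]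
    exact hdesc
  have hasc' : ℓ y⁻¹ < ℓ (y⁻¹ * s d) := by
    rw [← cs.length_inv (y⁻¹ * s d), h1, cs.length_inv]
    exact hasc
  have h2 := Z3 cs (ble_inv cs hle) hdesc' hasc'
  have h3 := ble_inv cs h2
  rwa [inv_inv, h1] at h3

theorem dem : ∀ (n : ℕ) (x y : W), ℓ x = n →
    ∃ m : W, (∃ u v : W, Ble cs u x ∧ Ble cs v y ∧ m = u * v) ∧
      (∀ u v : W, Ble cs u x → Ble cs v y → Ble cs (u * v) m) := by
  intro n
  induction n using Nat.strong_induction_on with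
  | _ n IH =>
  intro x y hx
  by_cases hx1 : x = 1
  · subst hx1
    refine ⟨y, ⟨1, y, Ble.rfl cs, Ble.rfl cs, (one_mul y).symm⟩, ?_⟩
    intro u v hu hv
    have hu1 : u = 1 := ble_eq_of_length_ge cs hu (by simp)
    rw [hu1, one_mul]
    exact hv
  · obtain ⟨i, hi⟩ := cs.exists_leftDescent_of_ne_one hx1
    have hi' : ℓ (s i * x) < ℓ x := hi
    have hxx' : s i * (s i * x) = x := cs.simple_mul_simple_cancel_left i
    have hlen : ℓ (s i * x) + 1 = ℓ x := by
      rcases cs.length_simple_mul x i with h1 | h1 <;> omega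
    obtain ⟨m', ⟨u', v', hu', hv', hm'⟩, hbd⟩ :=
      IH (ℓ (s i * x)) (by omega) (s i * x) y rfl
    by_cases hm : ℓ (s i * m') < ℓ m'
    · -- m = m'
      refine ⟨m', ⟨u', v', ?_, hv', hm'⟩, ?_⟩
      · have hstep : Ble cs (s i * x) x :=
          Relation.ReflTransGen.single ⟨s i, cs.isReflection_simple i, hxx'.symm, hi'⟩
        exact hu'.trans hstep
      · intro u v hu hv
        by_cases hud : ℓ (s i * u) < ℓ u
        · have h1 : Ble cs (s i * u) x := Z2L cs hu hi'
          have h2 : ℓ (s i * u) < ℓ (s i * (s i * u)) := by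
            rw [cs.simple_mul_simple_cancel_left]
            exact hud
          have h3 : Ble cs (s i * u) (s i * x) := Z3L cs h1 hi' h2
          have h4 := hbd (s i * u) v h3 hv
          have h5 := Z2L cs h4 hm
          rwa [← mul_assoc, cs.simple_mul_simple_cancel_left] at h5
        · have huasc : ℓ u < ℓ (s i * u) := by
            have := cs.length_simple_mul_ne u i
            omega
          have h3 : Ble cs u (s i * x) := Z3L cs hu hi' huasc
          exact hbd u v h3 hv
    · -- m = s i * m'
      have hmasc : ℓ m' < ℓ (s i * m') := by
        have := cs.length_simple_mul_ne m' i
        omega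
      refine ⟨s i * m', ⟨s i * u', v', ?_, hv', ?_⟩, ?_⟩
      · have h1 : ℓ (s i * x) < ℓ (s i * (s i * x)) := by
          rw [hxx']
          omega
        have h2 := Z1L cs hu' h1
        rwa [hxx'] at h2
      · rw [hm', mul_assoc]
      · intro u v hu hv
        by_cases hud : ℓ (s i * u) < ℓ u
        · have h1 : Ble cs (s i * u) x := Z2L cs hu hi'
          have h2 : ℓ (s i * u) < ℓ (s i * (s i * u)) := by
            rw [cs.simple_mul_simple_cancel_left]
            exact hud
          have h3 : Ble cs (s i * u) (s i * x) := Z3L cs h1 hi' h2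
          have h4 := hbd (s i * u) v h3 hv
          have h5 := Z1L cs h4 hmasc
          rwa [← mul_assoc, cs.simple_mul_simple_cancel_left] at h5
        · have huasc : ℓ u < ℓ (s i * u) := by
            have := cs.length_simple_mul_ne u i
            omega
          have h3 : Ble cs u (s i * x) := Z3L cs hu hi' huasc
          have h4 := hbd u v h3 hv
          have h5 : Ble cs m' (s i * m') :=
            Relation.ReflTransGen.single ⟨s i, cs.isReflection_simple i, rfl, hmasc⟩
          exact h4.trans h5

theorem bruhatLE_iff (u x : W) : cs.bruhatLE u x ↔ Ble cs u x := by
  constructor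
  · rintro ⟨ω, ω', hred, hπ, hsub, hπ'⟩
    rw [← hπ, ← hπ']
    exact SW cs hred hsub
  · intro h
    obtain ⟨a, hared, haπ⟩ := cs.exists_reduced_word' x
    obtain ⟨b, hb, hbred, hbπ⟩ := subword_of_ble cs hared haπ.symm h
    exact ⟨a, b, hared, haπ.symm, hb, hbπ⟩

end DemAux

/-- For any `x, y` in a Coxeter group, the set `{u * v : u ≤ x, v ≤ y}` contains a
unique maximal element in the Bruhat order. -/
theorem prodSet_exists_unique_maximal {B W : Type*} [Group W] {M : CoxeterMatrix B} (cs : CoxeterSystem M W) (x y : W) :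
    ∃! m : W, m ∈ cs.prodSet x y ∧ ∀ z ∈ cs.prodSet x y, cs.bruhatLE m z → z = m := by
  obtain ⟨m, ⟨u₀, v₀, hu₀, hv₀, hm₀⟩, hbd⟩ := DemAux.dem cs (cs.length x) x y rfl
  have hmem : m ∈ cs.prodSet x y :=
    ⟨u₀, v₀, (DemAux.bruhatLE_iff cs u₀ x).2 hu₀, (DemAux.bruhatLE_iff cs v₀ y).2 hv₀, hm₀⟩
  refine ⟨m, ⟨hmem, ?_⟩, ?_⟩
  · intro z hz hmz
    obtain ⟨u, v, hu, hv, rfl⟩ := hz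
    have hzm : DemAux.Ble cs (u * v) m :=
      hbd u v ((DemAux.bruhatLE_iff cs u x).1 hu) ((DemAux.bruhatLE_iff cs v y).1 hv)
    have hmz' : DemAux.Ble cs m (u * v) := (DemAux.bruhatLE_iff cs m (u * v)).1 hmz
    exact (DemAux.ble_eq_of_length_ge cs hmz' (DemAux.ble_length_le cs hzm)).symm
  · rintro m₂ ⟨hmem₂, hmax₂⟩
    obtain ⟨u, v, hu, hv, heq⟩ := hmem₂
    have h1 : DemAux.Ble cs m₂ m := by
      rw [heq]
      exact hbd u v ((DemAux.bruhatLE_iff cs u x).1 hu) ((DemAux.bruhatLE_iff cs v y).1 hv)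
    exact (hmax₂ m hmem ((DemAux.bruhatLE_iff cs m₂ m).2 h1)).symm
end

section
/- For any elements x, y of a Coxeter group W, there exist u' ≤ x and v' ≤ y such that x ∗ y = u'y = xv' with ℓ(x ∗ y) = ℓ(u') + ℓ(y) = ℓ(x) + ℓ(v'), where ∗ is the Demazure product and ℓ the length function. -/
set_option maxRecDepth 4000

noncomputable section
namespace DemazureAux

open List
open scoped Classical

variable {B W : Type*} [Group W] {M : CoxeterMatrix B} (cs : CoxeterSystem M W)

lemma simple_conj_cancel (i : B) (t : W) :
    cs.simple i * (cs.simple i * t * cs.simple i) * cs.simple i = t := by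
  rw [show cs.simple i * (cs.simple i * t * cs.simple i) * cs.simple i
      = (cs.simple i * cs.simple i) * t * (cs.simple i * cs.simple i) by group,
    cs.simple_mul_simple_self, one_mul, mul_one]

lemma conj_eq_iff (a b t u : W) : a * t * b = u ↔ t = a⁻¹ * u * b⁻¹ := by
  constructor
  · rintro rfl; group
  · rintro rfl; group


def sigma (i : B) : Equiv.Perm (W × ℤˣ) :=
  Function.Involutive.toPerm
    (fun p => (cs.simple i * p.1 * cs.simple i,
      (if p.1 = cs.simple i then (-1 : ℤˣ) else 1) * p.2))
    (by
      rintro ⟨t, ε⟩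
      simp only [Prod.mk.injEq]
      constructor
      · exact simple_conj_cancel cs i t
      · have hcond : (cs.simple i * t * cs.simple i = cs.simple i) ↔ t = cs.simple i := by
          rw [conj_eq_iff, cs.inv_simple, cs.simple_mul_simple_self, one_mul]
        rcases eq_or_ne t (cs.simple i) with h | h <;> simp [hcond, h])

lemma sigma_apply (i : B) (t : W) (ε : ℤˣ) :
    sigma cs i (t, ε) = (cs.simple i * t * cs.simple i,
      (if t = cs.simple i then (-1 : ℤˣ) else 1) * ε) := rfl


lemma sigma_mul_pow_apply (i j : B) (k : ℕ) (t : W) (ε : ℤˣ) :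
    ((sigma cs i * sigma cs j) ^ k) (t, ε) =
      ((cs.simple i * cs.simple j) ^ k * t * (cs.simple j * cs.simple i) ^ k,
        (∏ l ∈ Finset.range (2 * k),
          (if t = (cs.simple j * cs.simple i) ^ l * cs.simple j then (-1 : ℤˣ) else 1)) * ε) := by
  induction k generalizing t ε with
  | zero => simp
  | succ k ih =>
    set si := cs.simple i
    set sj := cs.simple j
    have hinv_si : si⁻¹ = si := cs.inv_simple i
    have hinv_sj : sj⁻¹ = sj := cs.inv_simple j
    rw [pow_succ, Equiv.Perm.mul_apply, Equiv.Perm.mul_apply, sigma_apply, sigma_apply, ih]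
    have hq : ∀ l : ℕ, (si * (sj * t * sj) * si = (sj * si) ^ l * sj) ↔
        (t = (sj * si) ^ (2 + l) * sj) := by
      intro l
      rw [show si * (sj * t * sj) * si = (si * sj) * t * (sj * si) by
        simp [mul_assoc], conj_eq_iff]
      have e : (si * sj)⁻¹ * ((sj * si) ^ l * sj) * (sj * si)⁻¹
          = (sj * si) ^ (2 + l) * sj := by
        rw [mul_inv_rev, mul_inv_rev, hinv_si, hinv_sj,
          show 2 + l = 1 + l + 1 by omega, pow_add, pow_add, pow_one]
        simp [mul_assoc]
      rw [e]
    simp only [Prod.mk.injEq]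
    constructor
    · rw [pow_succ (si * sj) k, pow_succ' (sj * si) k]
      simp [mul_assoc]
      rfl
    · have hrw : (∏ l ∈ Finset.range (2 * k),
          (if si * (sj * t * sj) * si = (sj * si) ^ l * sj then (-1 : ℤˣ) else 1)) =
          ∏ l ∈ Finset.range (2 * k),
          (if t = (sj * si) ^ (2 + l) * sj then (-1 : ℤˣ) else 1) := by
        refine Finset.prod_congr rfl fun l _ => ?_
        rw [if_congr (hq l) rfl rfl]
      rw [hrw, show 2 * (k + 1) = 2 + 2 * k by ring, Finset.prod_range_add]
      have h2 : (∏ l ∈ Finset.range 2,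
          (if t = (sj * si) ^ l * sj then (-1 : ℤˣ) else 1)) =
          (if t = sj then (-1 : ℤˣ) else 1) * (if t = sj * si * sj then (-1 : ℤˣ) else 1) := by
        rw [Finset.prod_range_succ, Finset.prod_range_one, pow_zero, one_mul, pow_one,
          mul_assoc]
      have hcond1 : (sj * t * sj = si) ↔ (t = sj * si * sj) := by
        rw [conj_eq_iff, hinv_sj]
      rw [h2, show (if sj * t * sj = si then (-1:ℤˣ) else 1)
        = (if t = sj * si * sj then (-1:ℤˣ) else 1) from if_congr hcond1 rfl rfl]
      simp only [mul_comm, mul_left_comm, mul_assoc]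
      rfl

lemma isLiftable_sigma : M.IsLiftable (sigma cs) := by
  intro i j
  apply Equiv.ext
  rintro ⟨t, ε⟩
  rw [sigma_mul_pow_apply]
  have h1 : (cs.simple i * cs.simple j) ^ M i j = 1 := cs.simple_mul_simple_pow i j
  have h2 : (cs.simple j * cs.simple i) ^ M i j = 1 := cs.simple_mul_simple_pow' i j
  have hsign : (∏ l ∈ Finset.range (2 * M i j),
      (if t = (cs.simple j * cs.simple i) ^ l * cs.simple j then (-1 : ℤˣ) else 1)) = 1 := by
    rw [two_mul, Finset.prod_range_add]
    have : ∀ l : ℕ, (if t = (cs.simple j * cs.simple i) ^ (M i j + l) * cs.simple j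
        then (-1 : ℤˣ) else 1) =
        (if t = (cs.simple j * cs.simple i) ^ l * cs.simple j then (-1 : ℤˣ) else 1) := by
      intro l
      rw [pow_add, h2, one_mul]
    rw [Finset.prod_congr rfl (fun l _ => this l)]
    exact Int.units_mul_self _
  simp [h1, h2, hsign]

def phi : W →* Equiv.Perm (W × ℤˣ) := cs.lift ⟨sigma cs, isLiftable_sigma cs⟩

lemma phi_simple (i : B) : phi cs (cs.simple i) = sigma cs i :=
  cs.lift_apply_simple (isLiftable_sigma cs) i

lemma phi_wordProd_reverse (ω : List B) (t : W) (ε : ℤˣ) :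
    phi cs (cs.wordProd ω.reverse) (t, ε) =
      ((cs.wordProd ω)⁻¹ * t * cs.wordProd ω,
        (-1 : ℤˣ) ^ (List.count t (cs.leftInvSeq ω)) * ε) := by
  induction ω generalizing t ε with
  | nil => simp
  | cons i ω ih =>
    have h1 : cs.wordProd ((i :: ω).reverse) = cs.wordProd ω.reverse * cs.simple i := by
      rw [reverse_cons, cs.wordProd_append]
      simp [cs.wordProd_cons]
    rw [h1, map_mul, Equiv.Perm.mul_apply, phi_simple, sigma_apply, ih]
    have hlis : cs.leftInvSeq (i :: ω)
        = cs.simple i :: List.map (MulAut.conj (cs.simple i)) (cs.leftInvSeq ω) := rfl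
    have hcount : List.count t (cs.leftInvSeq (i :: ω))
        = List.count (cs.simple i * t * cs.simple i) (cs.leftInvSeq ω)
          + (if t = cs.simple i then 1 else 0) := by
      rw [hlis, List.count_cons]
      congr 1
      have ht : t = (MulAut.conj (cs.simple i)) (cs.simple i * t * cs.simple i) := by
        simp only [MulAut.conj_apply, cs.inv_simple]
        exact (simple_conj_cancel cs i t).symm
      rw [show List.count t (List.map (⇑(MulAut.conj (cs.simple i))) (cs.leftInvSeq ω))
          = List.count ((MulAut.conj (cs.simple i)) (cs.simple i * t * cs.simple i))
            (List.map (⇑(MulAut.conj (cs.simple i))) (cs.leftInvSeq ω)) from by rw [← ht],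
        List.count_map_of_injective _ _ (MulAut.conj (cs.simple i)).injective]
      rcases eq_or_ne t (cs.simple i) with h | h
      · subst h; simp
      · simp [beq_iff_eq, h, Ne.symm h]
    simp only [Prod.mk.injEq]
    constructor
    · rw [cs.wordProd_cons, mul_inv_rev, cs.inv_simple]
      simp [mul_assoc]
    · rw [hcount, pow_add]
      rcases eq_or_ne t (cs.simple i) with h | h <;> simp [h, pow_one, mul_assoc]

lemma mem_leftInvSeq_of_lt {ω : List B} (hω : cs.IsReduced ω) {i : B}
    (h : cs.length (cs.simple i * cs.wordProd ω) < cs.length (cs.wordProd ω)) :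
    cs.simple i ∈ cs.leftInvSeq ω := by
  obtain ⟨ω', hω', heq⟩ := cs.exists_reduced_word' (cs.simple i * cs.wordProd ω)
  have hnot : cs.simple i ∉ cs.leftInvSeq ω' := by
    intro hmem
    have hinv := (cs.isLeftInversion_of_mem_leftInvSeq hω' hmem).2
    rw [← heq] at hinv
    rw [show cs.simple i * (cs.simple i * cs.wordProd ω)
        = (cs.simple i * cs.simple i) * cs.wordProd ω by rw [mul_assoc],
      cs.simple_mul_simple_self, one_mul] at hinv
    omega
  by_contra hmem
  have hrel : cs.wordProd ω.reverse = cs.wordProd ω'.reverse * cs.simple i := by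
    rw [cs.wordProd_reverse, cs.wordProd_reverse, ← heq, mul_inv_rev, mul_assoc,
      cs.inv_simple, cs.simple_mul_simple_self, mul_one]
  have key := congrArg (fun f => (f (cs.simple i, (1 : ℤˣ))).2) (congrArg (phi cs) hrel)
  simp only [map_mul, Equiv.Perm.mul_apply, phi_simple] at key
  rw [sigma_apply, if_pos rfl] at key
  rw [show cs.simple i * cs.simple i * cs.simple i
      = cs.simple i by rw [cs.simple_mul_simple_self, one_mul]] at key
  rw [phi_wordProd_reverse, phi_wordProd_reverse] at key
  rw [List.count_eq_zero_of_not_mem hmem, List.count_eq_zero_of_not_mem hnot] at key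
  simp at key

lemma exchange {ω : List B} (hω : cs.IsReduced ω) {i : B}
    (h : cs.length (cs.simple i * cs.wordProd ω) < cs.length (cs.wordProd ω)) :
    ∃ j < ω.length, cs.simple i * cs.wordProd ω = cs.wordProd (ω.eraseIdx j) := by
  have hmem := mem_leftInvSeq_of_lt cs hω h
  obtain ⟨j, hj, hget⟩ := List.mem_iff_getElem.mp hmem
  have hj' : j < ω.length := by simpa using hj
  refine ⟨j, hj', ?_⟩
  rw [show cs.simple i = (cs.leftInvSeq ω).getD j 1 from by
      rw [List.getD_eq_getElem _ _ hj, hget]]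
  exact cs.getD_leftInvSeq_mul_wordProd ω j

lemma key (star : W → W → W)
    (hstar_one : ∀ w : W, star 1 w = w)
    (hstar_simple : ∀ (i : B) (w : W), star (cs.simple i) w =
      if cs.length w < cs.length (cs.simple i * w) then cs.simple i * w else w)
    (hstar_assoc : ∀ a b c : W, star (star a b) c = star a (star b c))
    (Ω : List B) (hΩ : cs.IsReduced Ω) :
    ∀ ξ : List B, cs.IsReduced ξ →
    ∃ ξ' ρ : List B, ξ'.Sublist ξ ∧ ρ.Sublist Ω ∧ cs.IsReduced ξ' ∧ cs.IsReduced ρ ∧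
      star (cs.wordProd ξ) (cs.wordProd Ω) = cs.wordProd ξ' * cs.wordProd Ω ∧
      star (cs.wordProd ξ) (cs.wordProd Ω) = cs.wordProd ξ * cs.wordProd ρ ∧
      cs.length (star (cs.wordProd ξ) (cs.wordProd Ω))
        = ξ'.length + cs.length (cs.wordProd Ω) ∧
      cs.length (star (cs.wordProd ξ) (cs.wordProd Ω)) = ξ.length + ρ.length := by
  intro ξ
  induction ξ with
  | nil =>
    intro _
    refine ⟨[], Ω, List.Sublist.refl _, List.Sublist.refl _, ?_, hΩ, ?_, ?_, ?_, ?_⟩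
    · simp [CoxeterSystem.IsReduced]
    · simp [hstar_one]
    · simp [hstar_one]
    · simp [hstar_one]
    · simp only [cs.wordProd_nil, hstar_one, List.length_nil, zero_add]
      exact hΩ
  | cons i ξ₁ ih =>
    intro hξ
    have hξ₁ : cs.IsReduced ξ₁ := by
      have := CoxeterSystem.IsReduced.drop (ω := i :: ξ₁) hξ 1
      simpa using this
    obtain ⟨ξ₁', ρ₁, hsub1, hsub2, hred1, hred2, hz1, hz2, hl1, hl2⟩ := ih hξ₁
    set z := star (cs.wordProd ξ₁) (cs.wordProd Ω) with hzdef
    have hπξ : cs.wordProd (i :: ξ₁) = cs.simple i * cs.wordProd ξ₁ := cs.wordProd_cons i ξ₁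
    have hlξ : cs.length (cs.wordProd (i :: ξ₁)) = ξ₁.length + 1 := by
      rw [hξ]; simp
    have hlξ₁ : cs.length (cs.wordProd ξ₁) = ξ₁.length := hξ₁
    have hlt1 : cs.length (cs.wordProd ξ₁) < cs.length (cs.simple i * cs.wordProd ξ₁) := by
      rw [← hπξ, hlξ, hlξ₁]; omega
    have hstep : star (cs.wordProd (i :: ξ₁)) (cs.wordProd Ω) = star (cs.simple i) z := by
      have h' : star (cs.simple i) (cs.wordProd ξ₁) = cs.simple i * cs.wordProd ξ₁ := by
        rw [hstar_simple, if_pos hlt1]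
      rw [hπξ, ← h', hstar_assoc]
    have hsz := cs.length_simple_mul z i
    by_cases hc : cs.length z < cs.length (cs.simple i * z)
    · -- star = s_i * z
      have hszA : cs.length (cs.simple i * z) = cs.length z + 1 := by omega
      have hstarA : star (cs.wordProd (i :: ξ₁)) (cs.wordProd Ω) = cs.simple i * z := by
        rw [hstep, hstar_simple, if_pos hc]
      have hured : cs.IsReduced (i :: ξ₁') := by
        have hle : cs.length (cs.wordProd (i :: ξ₁')) ≤ ξ₁'.length + 1 := by
          simpa using cs.length_wordProd_le (i :: ξ₁')
        have hmul : cs.simple i * z = cs.wordProd (i :: ξ₁') * cs.wordProd Ω := by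
          rw [cs.wordProd_cons, hz1, mul_assoc]
        have hge : cs.length (cs.simple i * z)
            ≤ cs.length (cs.wordProd (i :: ξ₁')) + cs.length (cs.wordProd Ω) := by
          rw [hmul]; exact cs.length_mul_le _ _
        have : cs.IsReduced (i :: ξ₁') ↔
            cs.length (cs.wordProd (i :: ξ₁')) = ξ₁'.length + 1 := by
          unfold CoxeterSystem.IsReduced; simp
        rw [this]
        omega
      refine ⟨i :: ξ₁', ρ₁, hsub1.cons₂ i, hsub2, hured, hred2, ?_, ?_, ?_, ?_⟩
      · rw [hstarA, cs.wordProd_cons, hz1, mul_assoc]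
      · rw [hstarA, hπξ, hz2, mul_assoc]
      · rw [hstarA, hszA, hl1]; simp; omega
      · rw [hstarA, hszA, hl2]; simp; omega
    · -- star = z, use the exchange property
      have hszB : cs.length (cs.simple i * z) + 1 = cs.length z := by omega
      have hstarB : star (cs.wordProd (i :: ξ₁)) (cs.wordProd Ω) = z := by
        rw [hstep, hstar_simple, if_neg hc]
      have hzprod : z = cs.wordProd (ξ₁ ++ ρ₁) := by rw [cs.wordProd_append, ← hz2]
      have hredcat : cs.IsReduced (ξ₁ ++ ρ₁) := by
        unfold CoxeterSystem.IsReduced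
        rw [← hzprod, List.length_append]
        exact hl2 ▸ (by rw [hzdef])
      have hltz : cs.length (cs.simple i * cs.wordProd (ξ₁ ++ ρ₁))
          < cs.length (cs.wordProd (ξ₁ ++ ρ₁)) := by
        rw [← hzprod]; omega
      obtain ⟨j, hj, hdel⟩ := exchange cs hredcat hltz
      rw [List.length_append] at hj
      by_cases hjlt : j < ξ₁.length
      · exfalso
        rw [List.eraseIdx_append_of_lt_length hjlt, cs.wordProd_append,
          cs.wordProd_append, ← mul_assoc] at hdel
        have hcancel : cs.simple i * cs.wordProd ξ₁ = cs.wordProd (ξ₁.eraseIdx j) :=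
          mul_right_cancel hdel
        have h1 : cs.length (cs.simple i * cs.wordProd ξ₁) = ξ₁.length + 1 := by
          rw [← hπξ]; exact hlξ
        have h2 : cs.length (cs.wordProd (ξ₁.eraseIdx j)) ≤ ξ₁.length - 1 := by
          have := cs.length_wordProd_le (ξ₁.eraseIdx j)
          have hlen : (ξ₁.eraseIdx j).length = ξ₁.length - 1 := by
            rw [List.length_eraseIdx]; simp [hjlt]
          omega
        rw [hcancel] at h1
        omega
      · push_neg at hjlt
        set ρ := ρ₁.eraseIdx (j - ξ₁.length) with hρdef
        have hidx : j - ξ₁.length < ρ₁.length := by omega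
        have hρ₁pos : 0 < ρ₁.length := by omega
        have hlenρ : ρ.length = ρ₁.length - 1 := by
          rw [hρdef, List.length_eraseIdx]; simp [hidx]
        rw [List.eraseIdx_append_of_length_le hjlt, cs.wordProd_append,
          cs.wordProd_append, ← hz2] at hdel
        have hveq : z = cs.wordProd (i :: ξ₁) * cs.wordProd ρ := by
          have := congrArg (fun w => cs.simple i * w) hdel
          rw [← mul_assoc, cs.simple_mul_simple_self, one_mul] at this
          rw [this, cs.wordProd_cons, mul_assoc]
        have hρred : cs.IsReduced ρ := by
          have hle : cs.length (cs.wordProd ρ) ≤ ρ.length := cs.length_wordProd_le ρ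
          have hge : cs.length z ≤ cs.length (cs.wordProd (i :: ξ₁))
              + cs.length (cs.wordProd ρ) := by
            rw [hveq]; exact cs.length_mul_le _ _
          unfold CoxeterSystem.IsReduced
          rw [hlξ] at hge
          have hlz : cs.length z = ξ₁.length + ρ₁.length := hl2
          omega
        refine ⟨ξ₁', ρ, hsub1.cons i, (List.eraseIdx_sublist ρ₁ (j - ξ₁.length)).trans hsub2,
          hred1, hρred, ?_, ?_, ?_, ?_⟩
        · rw [hstarB, hz1]
        · rw [hstarB, hveq]
        · rw [hstarB]; exact hl1
        · rw [hstarB]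
          have hlz : cs.length z = ξ₁.length + ρ₁.length := hl2
          simp only [List.length_cons]
          omega

end DemazureAux

/-- There exist `u' ≤ x` and `v' ≤ y` with `x ∗ y = u' * y = x * v'` and
`ℓ(x ∗ y) = ℓ(u') + ℓ(y) = ℓ(x) + ℓ(v')`. -/
theorem demazure_exists_length_additive {B W : Type*} [Group W] {M : CoxeterMatrix B} (cs : CoxeterSystem M W)
    (star : W → W → W)
    (hstar_one : ∀ w : W, star 1 w = w)
    (hstar_simple : ∀ (i : B) (w : W), star (cs.simple i) w =
      if cs.length w < cs.length (cs.simple i * w) then cs.simple i * w else w)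
    (hstar_assoc : ∀ a b c : W, star (star a b) c = star a (star b c))
    (x y : W) :
    ∃ u' v' : W, cs.bruhatLE u' x ∧ cs.bruhatLE v' y ∧
      star x y = u' * y ∧ star x y = x * v' ∧
      cs.length (star x y) = cs.length u' + cs.length y ∧
      cs.length (star x y) = cs.length x + cs.length v' := by
  obtain ⟨Ω, hΩ, hy⟩ := cs.exists_reduced_word' y
  obtain ⟨ξ, hξ, hx⟩ := cs.exists_reduced_word' x
  obtain ⟨ξ', ρ, hsub1, hsub2, hred1, hred2, he1, he2, hl1, hl2⟩ :=
    DemazureAux.key cs star hstar_one hstar_simple hstar_assoc Ω hΩ ξ hξ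
  refine ⟨cs.wordProd ξ', cs.wordProd ρ,
    ⟨ξ, ξ', hξ, hx.symm, hsub1, rfl⟩, ⟨Ω, ρ, hΩ, hy.symm, hsub2, rfl⟩, ?_, ?_, ?_, ?_⟩
  · rw [hx, hy, he1]
  · rw [hx, hy, he2]
  · rw [hx, hy, hl1, hred1, hΩ]
  · rw [hx, hy, hl2, hred2, hξ]
end
end

section
/- For any elements x, y of a Coxeter group W, the set {uy : u ≤ x} contains a unique minimal element in the Bruhat order. -/
/-- The set of products `u * y` with `u ≤ x` in the Bruhat order. -/
def CoxeterSystem.triSet {B W : Type*} [Group W] {M : CoxeterMatrix B}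
    (cs : CoxeterSystem M W) (x y : W) : Set W :=
  {w | ∃ u : W, cs.bruhatLE u x ∧ w = u * y}

namespace CoxBruhat

open CoxeterSystem List

variable {B W : Type*} [Group W] {M : CoxeterMatrix B} (cs : CoxeterSystem M W)

local prefix:100 "s" => cs.simple
local prefix:100 "π" => cs.wordProd
local prefix:100 "ℓ" => cs.length

/-- The group of `ZMod 2`-valued functions on `W`, written multiplicatively. -/
abbrev A (W : Type*) := W → Multiplicative (ZMod 2)

/-- Conjugation action of `W` on `A W`. -/
def conjAct (w : W) : A W ≃* A W where
  toFun f := fun t => f (w⁻¹ * t * w)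
  invFun f := fun t => f (w * t * w⁻¹)
  left_inv f := by funext t; group
  right_inv f := by funext t; group
  map_mul' f g := rfl

/-- Conjugation as a homomorphism `W →* MulAut (A W)`. -/
def conjHom : W →* MulAut (A W) where
  toFun := conjAct
  map_one' := by ext f t; simp [conjAct]
  map_mul' w₁ w₂ := by
    ext f t
    simp only [conjAct, MulEquiv.coe_mk, Equiv.coe_fn_mk, MulAut.mul_apply]
    congr 1
    group

@[simp] lemma conjHom_apply (w : W) (f : A W) (t : W) :
    conjHom w f t = f (w⁻¹ * t * w) := rfl

open scoped Classical in
noncomputable def dlt (i : B) : A W := fun t => Multiplicative.ofAdd (if t = cs.simple i then 1 else 0)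

abbrev G (W : Type*) [Group W] := SemidirectProduct (A W) W conjHom

/-- Power formula in the semidirect product. -/
lemma sdPow (g : A W) (a : W) (m : ℕ) :
    ((⟨g, a⟩ : G W) ^ m).left = ∏ k ∈ Finset.range m, conjHom (a ^ k) g ∧
    ((⟨g, a⟩ : G W) ^ m).right = a ^ m := by
  induction m with
  | zero => simp
  | succ m ih =>
    rw [pow_succ, pow_succ]
    constructor
    · rw [SemidirectProduct.mul_left, ih.1, ih.2, Finset.prod_range_succ]
    · rw [SemidirectProduct.mul_right, ih.2]


private lemma sq_one (x : Multiplicative (ZMod 2)) : x * x = 1 := by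
  have h : ∀ y : ZMod 2, y + y = 0 := by decide
  calc x * x = Multiplicative.ofAdd (Multiplicative.toAdd x + Multiplicative.toAdd x) := rfl
    _ = Multiplicative.ofAdd 0 := by rw [h]
    _ = 1 := rfl

private lemma prod_pair {C : Type*} [CommMonoid C] (u : ℕ → C) (m : ℕ) :
    ∏ k ∈ Finset.range m, (u (2*k) * u (2*k+1)) = ∏ n ∈ Finset.range (2*m), u n := by
  induction m with
  | zero => simp
  | succ m ih =>
    have h2 : 2 * (m + 1) = (2 * m + 1) + 1 := by ring
    rw [Finset.prod_range_succ, ih, h2, Finset.prod_range_succ, Finset.prod_range_succ,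
      mul_assoc]

private lemma conj_eq_iff {W : Type*} [Group W] (c x y : W) :
    c⁻¹ * x * c = y ↔ x = c * y * c⁻¹ := by
  constructor
  · intro h; rw [← h]; group
  · intro h; rw [h]; group

lemma liftable : M.IsLiftable (fun i => (⟨dlt cs i, cs.simple i⟩ : G W)) := by
  classical
  intro i j
  set a : W := cs.simple i * cs.simple j with ha
  have hsa' : cs.simple i * a⁻¹ = a * cs.simple i := by
    rw [ha, mul_inv_rev, cs.inv_simple, cs.inv_simple]
    rw [mul_assoc]
  have key' : ∀ k : ℕ, cs.simple i * a⁻¹ ^ k = a ^ k * cs.simple i := by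
    intro k
    induction k with
    | zero => simp
    | succ k ih =>
      rw [pow_succ, ← mul_assoc, ih, mul_assoc, hsa', ← mul_assoc, ← pow_succ]
  have hk : ∀ k : ℕ, cs.simple i * (a^k)⁻¹ = a^k * cs.simple i := by
    intro k; rw [← inv_pow]; exact key' k
  have key2 : ∀ k : ℕ, a ^ k * cs.simple i * (a ^ k)⁻¹ = a ^ (2*k) * cs.simple i := by
    intro k
    calc a^k * cs.simple i * (a^k)⁻¹ = a^k * (cs.simple i * (a^k)⁻¹) := by rw [mul_assoc]
      _ = a^k * (a^k * cs.simple i) := by rw [hk]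
      _ = a^(2*k) * cs.simple i := by rw [← mul_assoc, ← pow_add, two_mul]
  have key3 : ∀ k : ℕ,
      a ^ k * (cs.simple i * cs.simple j * cs.simple i) * (a ^ k)⁻¹
        = a ^ (2*k+1) * cs.simple i := by
    intro k
    have h1 : cs.simple i * cs.simple j * cs.simple i = a * cs.simple i := by rw [ha]
    calc a ^ k * (cs.simple i * cs.simple j * cs.simple i) * (a ^ k)⁻¹
        = a ^ k * (a * cs.simple i) * (a ^ k)⁻¹ := by rw [h1]
      _ = a ^ k * (a * (cs.simple i * (a ^ k)⁻¹)) := by rw [mul_assoc, mul_assoc]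
      _ = a ^ k * (a * (a ^ k * cs.simple i)) := by rw [hk]
      _ = ((a ^ k * a) * a ^ k) * cs.simple i := by rw [← mul_assoc, ← mul_assoc]
      _ = a ^ (2*k+1) * cs.simple i := by
          rw [← pow_succ, ← pow_add]
          congr 2
          ring
  set g : A W := dlt cs i * conjHom (cs.simple i) (dlt cs j) with hg
  have prodeq : (⟨dlt cs i, cs.simple i⟩ : G W) * ⟨dlt cs j, cs.simple j⟩ = ⟨g, a⟩ := by
    rw [SemidirectProduct.ext_iff]
    exact ⟨by rw [SemidirectProduct.mul_left], by rw [SemidirectProduct.mul_right]⟩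
  show ((⟨dlt cs i, cs.simple i⟩ : G W) * ⟨dlt cs j, cs.simple j⟩) ^ M i j = 1
  rw [prodeq]
  set m := M i j with hm
  have ham : a ^ m = 1 := cs.simple_mul_simple_pow i j
  have hpow := sdPow g a m
  rw [SemidirectProduct.ext_iff]
  refine ⟨?_, ?_⟩
  · rw [hpow.1, SemidirectProduct.one_left]
    funext t
    rw [Finset.prod_apply, Pi.one_apply]
    set u : ℕ → Multiplicative (ZMod 2) :=
      fun n => Multiplicative.ofAdd (if t = a ^ n * cs.simple i then 1 else 0) with hu
    have factor : ∀ k, (conjHom (a^k) g) t = u (2*k) * u (2*k+1) := by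
      intro k
      have hx : conjHom (a^k) g t
          = dlt cs i ((a^k)⁻¹ * t * a^k) * dlt cs j ((cs.simple i)⁻¹ *
              ((a^k)⁻¹ * t * a^k) * cs.simple i) := rfl
      rw [hx]
      congr 1
      · show Multiplicative.ofAdd (if (a^k)⁻¹ * t * a^k = cs.simple i then 1 else 0) = u (2*k)
        rw [hu]
        have hiff : ((a^k)⁻¹ * t * a^k = cs.simple i) ↔ (t = a ^ (2*k) * cs.simple i) := by
          rw [conj_eq_iff, key2]
        rw [if_congr hiff rfl rfl]
      · show Multiplicative.ofAdd
            (if (cs.simple i)⁻¹ * ((a^k)⁻¹ * t * a^k) * cs.simple i = cs.simple j then 1 else 0)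
            = u (2*k+1)
        rw [hu]
        have hiff : ((cs.simple i)⁻¹ * ((a^k)⁻¹ * t * a^k) * cs.simple i = cs.simple j)
            ↔ (t = a ^ (2*k+1) * cs.simple i) := by
          rw [conj_eq_iff, cs.inv_simple, conj_eq_iff, key3]
        rw [if_congr hiff rfl rfl]
    calc ∏ k ∈ Finset.range m, (conjHom (a^k)) g t
        = ∏ k ∈ Finset.range m, (u (2*k) * u (2*k+1)) :=
          Finset.prod_congr rfl (fun k _ => factor k)
      _ = ∏ n ∈ Finset.range (2*m), u n := prod_pair u m
      _ = (∏ n ∈ Finset.range m, u n) * ∏ n ∈ Finset.range m, u (m + n) := by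
          rw [two_mul, Finset.prod_range_add]
      _ = (∏ n ∈ Finset.range m, u n) * ∏ n ∈ Finset.range m, u n := by
          congr 1
          refine Finset.prod_congr rfl (fun n _ => ?_)
          have hpa : a ^ (m+n) = a ^ n := by rw [pow_add, ham, one_mul]
          simp only [hu, hpa]
      _ = 1 := sq_one _
  · rw [hpow.2, SemidirectProduct.one_right, ham]

/-- The sign homomorphism into the semidirect product. -/
noncomputable def phi : W →* G W := cs.lift ⟨fun i => ⟨dlt cs i, cs.simple i⟩, liftable cs⟩

/-- The reflection cocycle with values in `ZMod 2`. -/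
noncomputable def NN (w t : W) : ZMod 2 := Multiplicative.toAdd ((phi cs w).left t)

lemma phi_simple (i : B) : phi cs (cs.simple i) = ⟨dlt cs i, cs.simple i⟩ :=
  cs.lift_apply_simple (liftable cs) i

lemma phi_right (w : W) : (phi cs w).right = w := by
  have : (SemidirectProduct.rightHom.comp (phi cs) : W →* W) = MonoidHom.id W := by
    apply cs.ext_simple
    intro i
    simp [phi_simple, SemidirectProduct.rightHom]
  calc (phi cs w).right = (SemidirectProduct.rightHom.comp (phi cs)) w := rfl
    _ = w := by rw [this]; rfl

lemma NN_one (t : W) : NN cs 1 t = 0 := by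
  simp [NN]

lemma NN_mul (u v t : W) : NN cs (u * v) t = NN cs u t + NN cs v (u⁻¹ * t * u) := by
  unfold NN
  rw [map_mul, SemidirectProduct.mul_left, phi_right, Pi.mul_apply, conjHom_apply]
  rfl

open scoped Classical in
lemma NN_simple (i : B) (t : W) : NN cs (cs.simple i) t = if t = cs.simple i then 1 else 0 := by
  unfold NN
  rw [phi_simple]
  show Multiplicative.toAdd (dlt cs i t) = _
  unfold dlt
  rfl

lemma NN_inv (w t : W) : NN cs w⁻¹ (w⁻¹ * t * w) = NN cs w t := by
  have h := NN_mul cs w w⁻¹ t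
  rw [mul_inv_cancel, NN_one] at h
  have : ∀ x y : ZMod 2, 0 = x + y → y = x := by decide
  exact this _ _ h

lemma NN_reflection {t : W} (ht : cs.IsReflection t) : NN cs t t = 1 := by
  obtain ⟨w, i, rfl⟩ := ht
  set t := w * cs.simple i * w⁻¹ with hts
  have h1 : w⁻¹ * t * w = cs.simple i := by rw [hts]; group
  have h2 : t = w * (cs.simple i * w⁻¹) := by rw [hts, mul_assoc]
  rw [h2, NN_mul, NN_mul]
  rw [← h2, h1, NN_simple, if_pos rfl]
  have h3 : (cs.simple i)⁻¹ * cs.simple i * cs.simple i = cs.simple i := by group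
  rw [h3]
  have h4 : NN cs w⁻¹ (cs.simple i) = NN cs w t := by
    have := NN_inv cs w t
    rw [h1] at this
    exact this
  rw [h4]
  have : ∀ x : ZMod 2, x + (1 + x) = 1 := by decide
  exact this _

open scoped Classical in
lemma mem_leftInvSeq_iff {ω : List B} (hω : cs.IsReduced ω) (t : W) :
    t ∈ cs.leftInvSeq ω ↔ NN cs (cs.wordProd ω) t = 1 := by
  induction ω generalizing t with
  | nil =>
    simp only [CoxeterSystem.leftInvSeq, List.not_mem_nil, false_iff, cs.wordProd_nil, NN_one]
    intro h; exact absurd h.symm (by decide)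
  | cons i ω ih =>
    -- basic length facts
    have hred : cs.IsReduced ω := by
      have := hω.drop 1
      simpa using this
    have hlen : cs.length (cs.wordProd (i :: ω)) = ω.length + 1 := by
      exact hω
    have hup : cs.length (cs.wordProd ω) < cs.length (cs.simple i * cs.wordProd ω) := by
      rw [← cs.wordProd_cons, hlen, hred]
      exact Nat.lt_succ_self _
    have hNi : NN cs (cs.wordProd ω) (cs.simple i) = 0 := by
      by_contra hne
      have h1 : NN cs (cs.wordProd ω) (cs.simple i) = 1 := by
        have : ∀ x : ZMod 2, x ≠ 0 → x = 1 := by decide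
        exact this _ hne
      have := (ih hred (cs.simple i)).mpr h1
      have hinv := cs.isLeftInversion_of_mem_leftInvSeq hred this
      exact absurd hinv.2 (Nat.not_lt.mpr (le_of_lt hup))
    have hcons : cs.leftInvSeq (i :: ω)
        = cs.simple i :: List.map (MulAut.conj (cs.simple i)) (cs.leftInvSeq ω) := rfl
    rw [cs.wordProd_cons, hcons]
    have hNN : NN cs (cs.simple i * cs.wordProd ω) t
        = (if t = cs.simple i then 1 else 0)
          + NN cs (cs.wordProd ω) (cs.simple i * t * cs.simple i) := by
      rw [NN_mul, NN_simple, cs.inv_simple]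
    rw [hNN]
    have hconj : ∀ u : W, cs.simple i * (cs.simple i * u * cs.simple i) * cs.simple i = u := by
      intro u
      have h2 := cs.simple_mul_simple_self i
      calc cs.simple i * (cs.simple i * u * cs.simple i) * cs.simple i
          = (cs.simple i * cs.simple i) * u * (cs.simple i * cs.simple i) := by group
        _ = u := by rw [h2, one_mul, mul_one]
    by_cases hti : t = cs.simple i
    · rw [if_pos hti, hti]
      have h3 : cs.simple i * cs.simple i * cs.simple i = cs.simple i := by
        rw [cs.simple_mul_simple_self, one_mul]
      rw [h3, hNi]
      simp
    · rw [if_neg hti, zero_add, List.mem_cons]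
      have hmap : t ∈ List.map (MulAut.conj (cs.simple i)) (cs.leftInvSeq ω)
          ↔ cs.simple i * t * cs.simple i ∈ cs.leftInvSeq ω := by
        rw [List.mem_map]
        constructor
        · rintro ⟨u, hu, rfl⟩
          have heq : cs.simple i * (MulAut.conj (cs.simple i)) u * cs.simple i = u := by
            rw [MulAut.conj_apply, cs.inv_simple]
            exact hconj u
          rwa [heq]
        · intro hu
          refine ⟨cs.simple i * t * cs.simple i, hu, ?_⟩
          rw [MulAut.conj_apply, cs.inv_simple]
          exact hconj t
      rw [or_iff_right hti, hmap, ih hred]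

/-- Strong exchange property. -/
theorem strongExchange {ω : List B} (hω : cs.IsReduced ω) {t : W} (ht : cs.IsReflection t)
    (h : cs.length (t * cs.wordProd ω) < cs.length (cs.wordProd ω)) :
    ∃ j < ω.length, t * cs.wordProd ω = cs.wordProd (ω.eraseIdx j) := by
  have h1 : NN cs (cs.wordProd ω) t = 1 := by
    -- the hard direction
    have h0 : NN cs (t * cs.wordProd ω) t = 0 := by
      by_contra hne
      have h1 : NN cs (t * cs.wordProd ω) t = 1 := by
        have : ∀ x : ZMod 2, x ≠ 0 → x = 1 := by decide
        exact this _ hne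
      obtain ⟨ρ, hρred, hρ⟩ := cs.exists_reduced_word' (t * cs.wordProd ω)
      rw [hρ] at h1
      have hmem := (mem_leftInvSeq_iff cs hρred t).mpr h1
      have hinv := cs.isLeftInversion_of_mem_leftInvSeq hρred hmem
      rw [← hρ] at hinv
      have heq : t * (t * cs.wordProd ω) = cs.wordProd ω := by
        rw [← mul_assoc, ht.mul_self, one_mul]
      have hlt := hinv.2
      rw [heq] at hlt
      exact absurd hlt (Nat.not_lt.mpr (le_of_lt h))
    have hw : cs.wordProd ω = t * (t * cs.wordProd ω) := by
      rw [← mul_assoc, ht.mul_self, one_mul]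
    rw [hw, NN_mul, NN_reflection cs ht]
    have harg : t⁻¹ * t * t = t := by group
    rw [harg, h0, add_zero]
  have hmem := (mem_leftInvSeq_iff cs hω t).mpr h1
  obtain ⟨j, hj, hget⟩ := List.getElem_of_mem hmem
  have hjlen : j < ω.length := by
    have := cs.length_leftInvSeq ω
    omega
  refine ⟨j, hjlen, ?_⟩
  have hgd : (cs.leftInvSeq ω).getD j 1 = t := by
    rw [List.getD_eq_getElem _ _ hj, hget]
  rw [← hgd]
  exact cs.getD_leftInvSeq_mul_wordProd ω j


lemma isReduced_nil : cs.IsReduced ([] : List B) := by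
  unfold CoxeterSystem.IsReduced
  simp

lemma isReduced_tail {i : B} {ω : List B} (h : cs.IsReduced (i :: ω)) : cs.IsReduced ω := by
  have := h.drop 1
  simpa using this

lemma length_wordProd_eq {ω : List B} (h : cs.IsReduced ω) :
    cs.length (cs.wordProd ω) = ω.length := h

/-- Deletion property: every word has a reduced sublist with the same product. -/
theorem deletion : ∀ ω : List B, ∃ τ, τ.Sublist ω ∧ cs.IsReduced τ ∧
    cs.wordProd τ = cs.wordProd ω := by
  intro ω
  induction ω with
  | nil => exact ⟨[], List.Sublist.refl _, isReduced_nil cs, rfl⟩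
  | cons i ω ih =>
    obtain ⟨τ₁, hsub, hred, hprod⟩ := ih
    rcases cs.length_simple_mul (cs.wordProd τ₁) i with hup | hdown
    · refine ⟨i :: τ₁, List.Sublist.cons₂ i hsub, ?_, ?_⟩
      · show cs.length (cs.wordProd (i :: τ₁)) = (i :: τ₁).length
        rw [cs.wordProd_cons, hup, hred]
        simp
      · rw [cs.wordProd_cons, cs.wordProd_cons, hprod]
    · have hlt : cs.length (cs.simple i * cs.wordProd τ₁) < cs.length (cs.wordProd τ₁) := by
        omega
      obtain ⟨j, hj, hje⟩ := strongExchange cs hred (cs.isReflection_simple i) hlt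
      refine ⟨τ₁.eraseIdx j, ?_, ?_, ?_⟩
      · exact ((List.eraseIdx_sublist τ₁ j).trans hsub).trans (List.sublist_cons_self i ω)
      · show cs.length (cs.wordProd (τ₁.eraseIdx j)) = (τ₁.eraseIdx j).length
        rw [← hje]
        have h1 : (τ₁.eraseIdx j).length + 1 = τ₁.length := List.length_eraseIdx_add_one hj
        have h2 : cs.length (cs.wordProd τ₁) = τ₁.length := hred
        omega
      · rw [← hje, cs.wordProd_cons, hprod]

/-! ### Basic properties of the Bruhat order -/

lemma bruhat_refl (x : W) : cs.bruhatLE x x := by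
  obtain ⟨ω, hred, hw⟩ := cs.exists_reduced_word' x
  exact ⟨ω, ω, hred, hw.symm, List.Sublist.refl _, hw.symm⟩

lemma one_bruhat (x : W) : cs.bruhatLE 1 x := by
  obtain ⟨ω, hred, hw⟩ := cs.exists_reduced_word' x
  exact ⟨ω, [], hred, hw.symm, List.nil_sublist _, cs.wordProd_nil⟩

lemma bruhat_length_le {u w : W} (h : cs.bruhatLE u w) : cs.length u ≤ cs.length w := by
  obtain ⟨ω, ω', hred, hw, hsub, hu⟩ := h
  calc cs.length u = cs.length (cs.wordProd ω') := by rw [hu]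
    _ ≤ ω'.length := cs.length_wordProd_le ω'
    _ ≤ ω.length := hsub.length_le
    _ = cs.length w := by rw [← hw]; exact hred.symm

lemma bruhat_length_lt {u w : W} (h : cs.bruhatLE u w) (hne : u ≠ w) :
    cs.length u < cs.length w := by
  obtain ⟨ω, ω', hred, hw, hsub, hu⟩ := h
  obtain ⟨τ, hτsub, hτred, hτprod⟩ := deletion cs ω'
  have hτω : τ.Sublist ω := hτsub.trans hsub
  have hlen : τ.length ≤ ω.length := hτω.length_le
  have hne' : τ.length ≠ ω.length := by
    intro heq
    exact hne (by rw [← hu, ← hτprod, hτω.eq_of_length heq, hw])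
  calc cs.length u = τ.length := by rw [← hu, ← hτprod]; exact hτred
    _ < ω.length := lt_of_le_of_ne hlen hne'
    _ = cs.length w := by rw [← hw]; exact hred.symm

lemma bruhat_antisymm {u w : W} (h1 : cs.bruhatLE u w) (h2 : cs.bruhatLE w u) : u = w := by
  by_contra hne
  have := bruhat_length_lt cs h1 hne
  have := bruhat_length_lt cs h2 (Ne.symm hne)
  omega

lemma bruhat_le_one {u : W} (h : cs.bruhatLE u 1) : u = 1 := by
  obtain ⟨ω, ω', hred, hw, hsub, hu⟩ := h
  have h0 : ω.length = 0 := by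
    have := length_wordProd_eq cs hred
    rw [hw, cs.length_one] at this
    omega
  rw [List.length_eq_zero_iff] at h0
  subst h0
  rw [List.sublist_nil] at hsub
  subst hsub
  rw [← hu, cs.wordProd_nil]

/-! ### The chain ("reflection") order -/

/-- A single step in a Bruhat chain. -/
def chainStep (a b : W) : Prop :=
  ∃ t, cs.IsReflection t ∧ b = t * a ∧ cs.length a < cs.length b

/-- The chain order. -/
def chainLE : W → W → Prop := Relation.ReflTransGen (chainStep cs)

lemma chainLE_refl (a : W) : chainLE cs a a := Relation.ReflTransGen.refl

lemma chainLE_trans {a b c : W} (h1 : chainLE cs a b) (h2 : chainLE cs b c) :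
    chainLE cs a c := Relation.ReflTransGen.trans h1 h2

lemma chainLE_of_step {a b : W} (h : chainStep cs a b) : chainLE cs a b :=
  Relation.ReflTransGen.single h

lemma chainStep_simple_up {i : B} {a : W} (h : cs.length a < cs.length (cs.simple i * a)) :
    chainStep cs a (cs.simple i * a) :=
  ⟨cs.simple i, cs.isReflection_simple i, rfl, h⟩

lemma chainStep_simple_down {i : B} {a : W} (h : cs.length (cs.simple i * a) < cs.length a) :
    chainStep cs (cs.simple i * a) a := by
  refine ⟨cs.simple i, cs.isReflection_simple i, ?_, h⟩
  rw [← mul_assoc, cs.simple_mul_simple_self, one_mul]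

/-- E2: chain order implies the subword property for every reduced word. -/
theorem chain_subword : ∀ n : ℕ, ∀ w u : W, cs.length w = n → chainLE cs u w →
    ∀ ω : List B, cs.IsReduced ω → cs.wordProd ω = w →
    ∃ τ, τ.Sublist ω ∧ cs.IsReduced τ ∧ cs.wordProd τ = u := by
  intro n
  induction n using Nat.strong_induction_on with
  | _ n ih =>
    intro w u hn hchain ω hred hw
    rcases Relation.ReflTransGen.cases_tail hchain with heq | ⟨c, hc, t, ht, hwtc, hlt⟩
    · subst heq
      exact ⟨ω, List.Sublist.refl _, hred, hw⟩
    · have hc_eq : c = t * w := by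
        rw [hwtc, ← mul_assoc, ht.mul_self, one_mul]
      have hlt' : cs.length (t * cs.wordProd ω) < cs.length (cs.wordProd ω) := by
        rw [hw, ← hc_eq]
        exact hlt
      obtain ⟨j, hj, hje⟩ := strongExchange cs hred ht hlt'
      obtain ⟨ρ, hρsub, hρred, hρprod⟩ := deletion cs (ω.eraseIdx j)
      have hρc : cs.wordProd ρ = c := by rw [hρprod, ← hje, hw, ← hc_eq]
      have hlc : cs.length c < n := by
        rw [hc_eq, ← hn, ← hw]
        exact hlt'
      obtain ⟨σ, hσsub, hσred, hσprod⟩ :=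
        ih (cs.length c) hlc c u rfl hc ρ hρred hρc
      exact ⟨σ, (hσsub.trans hρsub).trans (List.eraseIdx_sublist ω j), hσred, hσprod⟩

lemma sconj (i : B) (x y : W) :
    (cs.simple i * x * cs.simple i) * (cs.simple i * y) = cs.simple i * (x * y) := by
  have h := cs.simple_mul_simple_self i
  calc (cs.simple i * x * cs.simple i) * (cs.simple i * y)
      = cs.simple i * x * (cs.simple i * cs.simple i) * y := by group
    _ = cs.simple i * x * 1 * y := by rw [h]
    _ = cs.simple i * (x * y) := by group

lemma simple_cancel (i : B) (x : W) : cs.simple i * (cs.simple i * x) = x := by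
  rw [← mul_assoc, cs.simple_mul_simple_self, one_mul]

lemma isReflection_sconj {t : W} (ht : cs.IsReflection t) (i : B) :
    cs.IsReflection (cs.simple i * t * cs.simple i) := by
  have := ht.conj (cs.simple i)
  rwa [cs.inv_simple] at this

/-- The grand mutual induction: subword property implies chain order (E1),
and the two lifting lemmas (L, L2). -/
theorem grand : ∀ n : ℕ,
    (∀ ω : List B, cs.IsReduced ω → ω.length = n → ∀ τ, τ.Sublist ω → cs.IsReduced τ →
      chainLE cs (cs.wordProd τ) (cs.wordProd ω))
  ∧ (∀ (i : B) (a b : W), chainLE cs a b → cs.length b = n →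
      cs.length a < cs.length (cs.simple i * a) → cs.length b < cs.length (cs.simple i * b) →
      chainLE cs (cs.simple i * a) (cs.simple i * b))
  ∧ (∀ (i : B) (a c : W), chainLE cs a c → cs.length c = n →
      cs.length a < cs.length (cs.simple i * a) → cs.length (cs.simple i * c) < cs.length c →
      chainLE cs a (cs.simple i * c)) := by
  intro n
  induction n using Nat.strong_induction_on with
  | _ n ih =>
    refine ⟨?_, ?_, ?_⟩
    -- ==================== E1 ====================
    · intro ω hred hn τ hτ hτred
      cases ω with
      | nil =>
        rw [List.sublist_nil] at hτ
        subst hτ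
        exact chainLE_refl cs _
      | cons i ω₁ =>
        have hred₁ := isReduced_tail cs hred
        have hl₁ : cs.length (cs.wordProd ω₁) = ω₁.length := hred₁
        have hlω : cs.length (cs.wordProd (i :: ω₁)) = ω₁.length + 1 := by
          have := length_wordProd_eq cs hred
          simpa using this
        have hcons : cs.wordProd (i :: ω₁) = cs.simple i * cs.wordProd ω₁ :=
          cs.wordProd_cons i ω₁
        have hup_b : cs.length (cs.wordProd ω₁) < cs.length (cs.simple i * cs.wordProd ω₁) := by
          rw [← hcons]
          omega
        have hn₁ : ω₁.length < n := by
          simp only [List.length_cons] at hn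
          omega
        rcases List.sublist_cons_iff.mp hτ with hτ1 | ⟨τ₁, rfl, hτ₁⟩
        · have h1 := (ih ω₁.length hn₁).1 ω₁ hred₁ rfl τ hτ1 hτred
          have hstep : chainStep cs (cs.wordProd ω₁) (cs.wordProd (i :: ω₁)) := by
            refine ⟨cs.simple i, cs.isReflection_simple i, hcons, ?_⟩
            omega
          exact chainLE_trans cs h1 (chainLE_of_step cs hstep)
        · have hτ₁red := isReduced_tail cs hτred
          have hlτ₁ : cs.length (cs.wordProd τ₁) = τ₁.length := hτ₁red
          have hlτ : cs.length (cs.wordProd (i :: τ₁)) = τ₁.length + 1 := by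
            have := length_wordProd_eq cs hτred
            simpa using this
          have hconsτ : cs.wordProd (i :: τ₁) = cs.simple i * cs.wordProd τ₁ :=
            cs.wordProd_cons i τ₁
          have hup_a : cs.length (cs.wordProd τ₁) < cs.length (cs.simple i * cs.wordProd τ₁) := by
            rw [← hconsτ]
            omega
          have h1 := (ih ω₁.length hn₁).1 ω₁ hred₁ rfl τ₁ hτ₁ hτ₁red
          have h2 := (ih ω₁.length hn₁).2.1 i (cs.wordProd τ₁) (cs.wordProd ω₁)
            h1 hl₁ hup_a hup_b
          rw [← hconsτ, ← hcons] at h2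
          exact h2
    -- ==================== L ====================
    · intro i a b hab hn ha hb
      rcases Relation.ReflTransGen.cases_tail hab with heq | ⟨c, hac, t, ht, hbtc, hcb⟩
      · rw [heq]
        exact chainLE_refl cs _
      · have hcn : cs.length c < n := by omega
        rcases Nat.lt_or_ge (cs.length c) (cs.length (cs.simple i * c)) with hcu | hge
        · have h1 := (ih (cs.length c) hcn).2.1 i a c hac rfl ha hcu
          have hlc : cs.length (cs.simple i * c) = cs.length c + 1 :=
            (cs.length_simple_mul c i).resolve_right (by omega)
          have hlb : cs.length (cs.simple i * b) = cs.length b + 1 :=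
            (cs.length_simple_mul b i).resolve_right (by omega)
          have hstep : chainStep cs (cs.simple i * c) (cs.simple i * b) := by
            refine ⟨cs.simple i * t * cs.simple i, isReflection_sconj cs ht i, ?_, by omega⟩
            rw [sconj, ← hbtc]
          exact chainLE_trans cs h1 (chainLE_of_step cs hstep)
        · have hlt : cs.length (cs.simple i * c) < cs.length c :=
            lt_of_le_of_ne hge (cs.length_simple_mul_ne c i)
          have h2 := (ih (cs.length c) hcn).2.2 i a c hac rfl ha hlt
          have hcanc : cs.simple i * (cs.simple i * c) = c := simple_cancel cs i c
          have h3 := (ih (cs.length (cs.simple i * c)) (by omega)).2.1 i a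
            (cs.simple i * c) h2 rfl ha (by rw [hcanc]; exact hlt)
          rw [hcanc] at h3
          have hstep1 : chainStep cs c b := ⟨t, ht, hbtc, hcb⟩
          have hstep2 : chainStep cs b (cs.simple i * b) :=
            chainStep_simple_up cs hb
          exact chainLE_trans cs h3
            (chainLE_trans cs (chainLE_of_step cs hstep1) (chainLE_of_step cs hstep2))
    -- ==================== L2 ====================
    · intro i a c hac hn ha hcd
      have hdi : cs.length (cs.simple i * c) + 1 = cs.length c :=
        (cs.length_simple_mul c i).resolve_left (by omega)
      obtain ⟨ρ₁, hρred, hρ⟩ := cs.exists_reduced_word' (cs.simple i * c)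
      have hlρ : ρ₁.length = cs.length (cs.simple i * c) := by rw [hρ]; exact hρred.symm
      have hcons_prod : cs.wordProd (i :: ρ₁) = c := by
        rw [cs.wordProd_cons, ← hρ, simple_cancel]
      have hcons_red : cs.IsReduced (i :: ρ₁) := by
        show cs.length (cs.wordProd (i :: ρ₁)) = (i :: ρ₁).length
        rw [hcons_prod, List.length_cons]
        omega
      obtain ⟨σ, hσsub, hσred, hσprod⟩ :=
        chain_subword cs (cs.length c) c a rfl hac (i :: ρ₁) hcons_red hcons_prod
      rcases List.sublist_cons_iff.mp hσsub with h1 | ⟨σ₁, rfl, hσ₁⟩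
      · have hE1 := (ih ρ₁.length (by omega)).1 ρ₁ hρred rfl σ h1 hσred
        rw [hσprod, ← hρ] at hE1
        exact hE1
      · exfalso
        have hσ₁red := isReduced_tail cs hσred
        have hla : cs.length a = σ₁.length + 1 := by
          rw [← hσprod]
          have := length_wordProd_eq cs hσred
          simpa using this
        have hsa : cs.simple i * a = cs.wordProd σ₁ := by
          rw [← hσprod, cs.wordProd_cons, simple_cancel]
        have hlsa : cs.length (cs.simple i * a) = σ₁.length := by
          rw [hsa]; exact hσ₁red
        omega

/-! ### Consequences -/

lemma E1_any {ω τ : List B} (hred : cs.IsReduced ω) (hτ : τ.Sublist ω) (hτred : cs.IsReduced τ) :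
    chainLE cs (cs.wordProd τ) (cs.wordProd ω) :=
  (grand cs ω.length).1 ω hred rfl τ hτ hτred

lemma L2_any {i : B} {a c : W} (h : chainLE cs a c)
    (ha : cs.length a < cs.length (cs.simple i * a))
    (hc : cs.length (cs.simple i * c) < cs.length c) :
    chainLE cs a (cs.simple i * c) :=
  (grand cs (cs.length c)).2.2 i a c h rfl ha hc

/-- Bruhat order implies chain order. -/
lemma bruhat_to_chain {u w : W} (h : cs.bruhatLE u w) : chainLE cs u w := by
  obtain ⟨ω, ω', hred, hw, hsub, hu⟩ := h
  obtain ⟨τ, hτsub, hτred, hτprod⟩ := deletion cs ω'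
  have := E1_any cs hred (hτsub.trans hsub) hτred
  rwa [hτprod, hu, hw] at this

/-- Chain order implies Bruhat order. -/
lemma chain_to_bruhat {u w : W} (h : chainLE cs u w) : cs.bruhatLE u w := by
  obtain ⟨ω, hred, hw⟩ := cs.exists_reduced_word' w
  obtain ⟨τ, hτsub, hτred, hτprod⟩ :=
    chain_subword cs (cs.length w) w u rfl h ω hred hw.symm
  exact ⟨ω, τ, hred, hw.symm, hτsub, hτprod⟩

/-- The subword property for every reduced word. -/
lemma bruhat_subword_all {u w : W} (h : cs.bruhatLE u w) {ω : List B}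
    (hred : cs.IsReduced ω) (hw : cs.wordProd ω = w) :
    ∃ τ, τ.Sublist ω ∧ cs.IsReduced τ ∧ cs.wordProd τ = u :=
  chain_subword cs (cs.length w) w u rfl (bruhat_to_chain cs h) ω hred hw

/-- Both-descents lifting. -/
lemma chain_lift_downdown {i : B} {a c : W} (h : chainLE cs a c)
    (hA : cs.length (cs.simple i * a) < cs.length a)
    (hC : cs.length (cs.simple i * c) < cs.length c) :
    chainLE cs (cs.simple i * a) (cs.simple i * c) := by
  have hdi : cs.length (cs.simple i * c) + 1 = cs.length c :=
    (cs.length_simple_mul c i).resolve_left (by omega)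
  obtain ⟨ρ₁, hρred, hρ⟩ := cs.exists_reduced_word' (cs.simple i * c)
  have hlρ : ρ₁.length = cs.length (cs.simple i * c) := by rw [hρ]; exact hρred.symm
  have hcons_prod : cs.wordProd (i :: ρ₁) = c := by
    rw [cs.wordProd_cons, ← hρ, simple_cancel]
  have hcons_red : cs.IsReduced (i :: ρ₁) := by
    show cs.length (cs.wordProd (i :: ρ₁)) = (i :: ρ₁).length
    rw [hcons_prod, List.length_cons]
    omega
  obtain ⟨σ, hσsub, hσred, hσprod⟩ :=
    chain_subword cs (cs.length c) c a rfl h (i :: ρ₁) hcons_red hcons_prod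
  rcases List.sublist_cons_iff.mp hσsub with h1 | ⟨σ₁, rfl, hσ₁⟩
  · have hE1 := E1_any cs hρred h1 hσred
    rw [hσprod, ← hρ] at hE1
    exact chainLE_trans cs (chainLE_of_step cs (chainStep_simple_down cs hA)) hE1
  · have hσ₁red := isReduced_tail cs hσred
    have hsa : cs.simple i * a = cs.wordProd σ₁ := by
      rw [← hσprod, cs.wordProd_cons, simple_cancel]
    have hE1 := E1_any cs hρred hσ₁ hσ₁red
    rw [← hsa, ← hρ] at hE1
    exact hE1

/-- Decomposition of the Bruhat interval below `x` along a left descent. -/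
lemma bruhat_cons {i : B} {x : W} (hd : cs.length (cs.simple i * x) < cs.length x) (u : W) :
    cs.bruhatLE u x ↔ (cs.bruhatLE u (cs.simple i * x) ∨
      ∃ u', cs.bruhatLE u' (cs.simple i * x) ∧ u = cs.simple i * u') := by
  have hdi : cs.length (cs.simple i * x) + 1 = cs.length x :=
    (cs.length_simple_mul x i).resolve_left (by omega)
  obtain ⟨ρ₁, hρred, hρ⟩ := cs.exists_reduced_word' (cs.simple i * x)
  have hlρ : ρ₁.length = cs.length (cs.simple i * x) := by rw [hρ]; exact hρred.symm
  have hcons_prod : cs.wordProd (i :: ρ₁) = x := by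
    rw [cs.wordProd_cons, ← hρ, simple_cancel]
  have hcons_red : cs.IsReduced (i :: ρ₁) := by
    show cs.length (cs.wordProd (i :: ρ₁)) = (i :: ρ₁).length
    rw [hcons_prod, List.length_cons]
    omega
  constructor
  · intro h
    obtain ⟨σ, hσsub, hσred, hσprod⟩ := bruhat_subword_all cs h hcons_red hcons_prod
    rcases List.sublist_cons_iff.mp hσsub with h1 | ⟨σ₁, rfl, hσ₁⟩
    · exact Or.inl ⟨ρ₁, σ, hρred, hρ.symm, h1, hσprod⟩
    · refine Or.inr ⟨cs.wordProd σ₁, ⟨ρ₁, σ₁, hρred, hρ.symm, hσ₁, rfl⟩, ?_⟩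
      rw [← hσprod, cs.wordProd_cons]
  · rintro (h | ⟨u', hu', rfl⟩)
    · obtain ⟨σ, hσsub, hσred, hσprod⟩ := bruhat_subword_all cs h hρred hρ.symm
      exact ⟨i :: ρ₁, σ, hcons_red, hcons_prod, hσsub.cons i, hσprod⟩
    · obtain ⟨σ, hσsub, hσred, hσprod⟩ := bruhat_subword_all cs hu' hρred hρ.symm
      refine ⟨i :: ρ₁, i :: σ, hcons_red, hcons_prod, hσsub.cons₂ i, ?_⟩
      rw [cs.wordProd_cons, hσprod]

/-- Existence of a chain-minimum of `triSet`. -/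
theorem exists_min : ∀ n : ℕ, ∀ x : W, cs.length x = n → ∀ y : W,
    ∃ m, m ∈ cs.triSet x y ∧ ∀ z ∈ cs.triSet x y, chainLE cs m z := by
  intro n
  induction n using Nat.strong_induction_on with
  | _ n ih =>
    intro x hn y
    rcases Nat.eq_zero_or_pos n with h0 | hpos
    · -- base case : x = 1
      have hx1 : x = 1 := by
        rw [← cs.length_eq_zero_iff, hn, h0]
      subst hx1
      refine ⟨y, ⟨1, one_bruhat cs 1, (one_mul y).symm⟩, ?_⟩
      rintro z ⟨u, hu, rfl⟩
      rw [bruhat_le_one cs hu, one_mul]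
      exact chainLE_refl cs y
    · have hxne : x ≠ 1 := by
        intro h
        rw [h, cs.length_one] at hn
        omega
      obtain ⟨i, hdesc⟩ := cs.exists_leftDescent_of_ne_one hxne
      have hd : cs.length (cs.simple i * x) < cs.length x := hdesc
      have hdi : cs.length (cs.simple i * x) + 1 = cs.length x :=
        (cs.length_simple_mul x i).resolve_left (by omega)
      obtain ⟨m', hm'mem, hm'min⟩ :=
        ih (cs.length (cs.simple i * x)) (by omega) (cs.simple i * x) rfl y
      obtain ⟨u', hu'x', hm'eq⟩ := hm'mem
      rcases Nat.lt_or_ge (cs.length m') (cs.length (cs.simple i * m')) with hup | hge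
      · -- m := m'
        refine ⟨m', ⟨u', (bruhat_cons cs hd u').mpr (Or.inl hu'x'), hm'eq⟩, ?_⟩
        rintro z ⟨u, hux, rfl⟩
        rcases (bruhat_cons cs hd u).mp hux with hu1 | ⟨u'', hu'', rfl⟩
        · exact hm'min (u * y) ⟨u, hu1, rfl⟩
        · set z' := u'' * y with hz'
          have hz'mem : z' ∈ cs.triSet (cs.simple i * x) y := ⟨u'', hu'', rfl⟩
          have h1 : chainLE cs m' z' := hm'min z' hz'mem
          have hzz : cs.simple i * u'' * y = cs.simple i * z' := by
            rw [hz', mul_assoc]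
          rw [hzz]
          rcases Nat.lt_or_ge (cs.length z') (cs.length (cs.simple i * z')) with hz'up | hz'ge
          · exact chainLE_trans cs h1 (chainLE_of_step cs (chainStep_simple_up cs hz'up))
          · have hz'down : cs.length (cs.simple i * z') < cs.length z' :=
              lt_of_le_of_ne hz'ge (cs.length_simple_mul_ne z' i)
            exact L2_any cs h1 hup hz'down
      · -- m := s i * m'
        have hdown : cs.length (cs.simple i * m') < cs.length m' :=
          lt_of_le_of_ne hge (cs.length_simple_mul_ne m' i)
        refine ⟨cs.simple i * m', ⟨cs.simple i * u',
          (bruhat_cons cs hd _).mpr (Or.inr ⟨u', hu'x', rfl⟩), by rw [hm'eq, mul_assoc]⟩, ?_⟩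
        rintro z ⟨u, hux, rfl⟩
        have hstepdown : chainLE cs (cs.simple i * m') m' :=
          chainLE_of_step cs (chainStep_simple_down cs hdown)
        rcases (bruhat_cons cs hd u).mp hux with hu1 | ⟨u'', hu'', rfl⟩
        · exact chainLE_trans cs hstepdown (hm'min (u * y) ⟨u, hu1, rfl⟩)
        · set z' := u'' * y with hz'
          have hz'mem : z' ∈ cs.triSet (cs.simple i * x) y := ⟨u'', hu'', rfl⟩
          have h1 : chainLE cs m' z' := hm'min z' hz'mem
          have hzz : cs.simple i * u'' * y = cs.simple i * z' := by
            rw [hz', mul_assoc]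
          rw [hzz]
          rcases Nat.lt_or_ge (cs.length z') (cs.length (cs.simple i * z')) with hz'up | hz'ge
          · exact chainLE_trans cs hstepdown (chainLE_trans cs h1
              (chainLE_of_step cs (chainStep_simple_up cs hz'up)))
          · have hz'down : cs.length (cs.simple i * z') < cs.length z' :=
              lt_of_le_of_ne hz'ge (cs.length_simple_mul_ne z' i)
            exact chain_lift_downdown cs h1 hdown hz'down

end CoxBruhat

/-- For any `x, y` in a Coxeter group, the set `{u * y : u ≤ x}` contains a unique minimal
element in the Bruhat order. -/
theorem triSet_exists_unique_minimal {B W : Type*} [Group W] {M : CoxeterMatrix B} (cs : CoxeterSystem M W) (x y : W) :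
    ∃! m : W, m ∈ cs.triSet x y ∧ ∀ z ∈ cs.triSet x y, cs.bruhatLE z m → z = m := by
  obtain ⟨m, hmem, hmin⟩ := CoxBruhat.exists_min cs (cs.length x) x rfl y
  refine ⟨m, ⟨hmem, ?_⟩, ?_⟩
  · intro z hz hzm
    exact CoxBruhat.bruhat_antisymm cs hzm (CoxBruhat.chain_to_bruhat cs (hmin z hz))
  · rintro m₂ ⟨hm₂mem, hm₂min⟩
    exact (hm₂min m hmem (CoxBruhat.chain_to_bruhat cs (hmin m₂ hm₂mem))).symm
end

section
/- Define x ▷ y to be the unique minimal element of {uy : u ≤ x}. Then there exists u' ≤ x with x ▷ y = u'y and ℓ(x ▷ y) = ℓ(y) − ℓ(u'). -/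
/-- `m` is the unique minimal element of `S` with respect to the Bruhat order. -/
def CoxeterSystem.IsUniqueBruhatMin {B W : Type*} [Group W] {M : CoxeterMatrix B}
    (cs : CoxeterSystem M W) (S : Set W) (m : W) : Prop :=
  (m ∈ S ∧ ∀ z ∈ S, cs.bruhatLE z m → z = m) ∧
    ∀ z ∈ S, (∀ z' ∈ S, cs.bruhatLE z' z → z' = z) → z = m

open CoxeterSystem List

namespace CoxSE

variable {B W : Type*} [Group W] {M : CoxeterMatrix B} (cs : CoxeterSystem M W)

local prefix:100 "s" => cs.simple
local prefix:100 "π" => cs.wordProd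
local prefix:100 "ℓ" => cs.length
local prefix:100 "ris" => cs.rightInvSeq
local prefix:100 "lis" => cs.leftInvSeq

noncomputable local instance : DecidableEq W := Classical.decEq W

lemma sandwich (i : B) (w : W) :
    s i * (s i * w * s i) * s i = w := by
  rw [show s i * (s i * w * s i) * s i = (s i * s i) * w * (s i * s i) by group,
    cs.simple_mul_simple_self, one_mul, mul_one]

lemma sandwich_iff (i : B) (w : W) :
    s i * w * s i = s i ↔ w = s i := by
  constructor
  · intro h
    have h2 := congrArg (fun z => s i * z * s i) h
    rw [sandwich] at h2
    rw [h2, cs.simple_mul_simple_self, one_mul]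
  · rintro rfl
    rw [cs.simple_mul_simple_self, one_mul]

/-- The sign-flipping involution attached to a simple generator. -/
noncomputable def nu (i : B) : Equiv.Perm (W × ℤˣ) :=
  Function.Involutive.toPerm
    (fun p => (s i * p.1 * s i, if p.1 = s i then -p.2 else p.2))
    (by
      rintro ⟨w, ε⟩
      simp only [Prod.mk.injEq]
      refine ⟨sandwich cs i w, ?_⟩
      by_cases h : w = s i
      · simp [h, sandwich_iff]
      · simp [h, (sandwich_iff cs i w).not.mpr h])

lemma nu_apply (i : B) (w : W) (ε : ℤˣ) :
    (nu cs i) (w, ε) = (s i * w * s i, if w = s i then -ε else ε) := rfl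

lemma F_apply (ω : List B) (w : W) (ε : ℤˣ) :
    ((ω.map (nu cs)).prod) (w, ε)
      = (π ω * w * (π ω)⁻¹, ε * (-1 : ℤˣ) ^ ((ris ω).count w)) := by
  induction ω generalizing ε with
  | nil => simp
  | cons i δ ih =>
    have hris : ris (i :: δ) = ((π δ)⁻¹ * (s i) * (π δ)) :: ris δ := rfl
    rw [List.map_cons, List.prod_cons, Equiv.Perm.mul_apply, ih, nu_apply, hris,
      List.count_cons]
    by_cases h : (π δ) * w * (π δ)⁻¹ = s i
    · have hw : w = (π δ)⁻¹ * s i * π δ := by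
        rw [← h]; group
      have hcond : ((π δ)⁻¹ * s i * π δ == w) = true := by
        simp [hw]
      rw [if_pos h, hcond]
      simp only [Prod.mk.injEq]
      constructor
      · rw [cs.wordProd_cons, mul_inv_rev, cs.inv_simple]
        group
      · rw [if_pos trivial, pow_succ, ← mul_assoc, mul_neg_one]
    · have hw : ¬ (w = (π δ)⁻¹ * s i * π δ) := by
        intro hc
        apply h
        rw [hc]; group
      have hcond : ((π δ)⁻¹ * s i * π δ == w) = false := by
        simp [Ne.symm hw]
      rw [if_neg h, hcond]
      simp only [Prod.mk.injEq]
      constructor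
      · rw [cs.wordProd_cons, mul_inv_rev, cs.inv_simple]
        group
      · simp



lemma sbc_pow (a b : B) (k : ℕ) :
    s b * (s a * s b) ^ k = ((s a * s b) ^ k)⁻¹ * s b := by
  have key : s b * (s a * s b) = (s a * s b)⁻¹ * s b := by
    rw [mul_inv_rev, cs.inv_simple, cs.inv_simple, mul_assoc]
  induction k with
  | zero => simp
  | succ k ih =>
    calc s b * (s a * s b) ^ (k + 1)
        = (s a * s b)⁻¹ * (s b * (s a * s b) ^ k) := by
          rw [pow_succ' (s a * s b) k, ← mul_assoc, key, mul_assoc]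
      _ = (s a * s b)⁻¹ * (((s a * s b) ^ k)⁻¹ * s b) := by rw [ih]
      _ = ((s a * s b) ^ (k + 1))⁻¹ * s b := by
          rw [pow_succ (s a * s b) k,
            mul_inv_rev ((s a * s b) ^ k) (s a * s b), mul_assoc]

lemma g_succ (a b : B) (p : ℕ) :
    (π (alternatingWord a b p))⁻¹ * π (alternatingWord a b (p+1))
      = ((s a * s b) ^ p)⁻¹ * s b := by
  rcases Nat.even_or_odd p with he | ho
  · obtain ⟨q, hq⟩ := he
    subst hq
    rw [cs.prod_alternatingWord_eq_mul_pow, cs.prod_alternatingWord_eq_mul_pow]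
    have h1 : (q + q) / 2 = q := by omega
    have h2 : (q + q + 1) / 2 = q := by omega
    rw [if_pos ⟨q, rfl⟩, if_neg (by simp [Nat.even_add_one, parity_simps]), h1, h2,
      one_mul, sbc_pow, ← mul_assoc, ← mul_inv_rev, ← pow_add]
  · obtain ⟨q, hq⟩ := ho
    subst hq
    rw [cs.prod_alternatingWord_eq_mul_pow, cs.prod_alternatingWord_eq_mul_pow]
    have h1 : (2 * q + 1) / 2 = q := by omega
    have h2 : (2 * q + 1 + 1) / 2 = q + 1 := by omega
    rw [if_neg (by simp [parity_simps]), if_pos (by refine ⟨q + 1, by omega⟩), h1, h2,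
      one_mul, mul_inv_rev, cs.inv_simple, mul_assoc, sbc_pow, ← mul_assoc,
      ← mul_inv_rev, ← pow_add]
    have e : q + 1 + q = 2 * q + 1 := by omega
    rw [e]

lemma ris_alt (a b : B) : ∀ n, ris (alternatingWord a b n)
    = ((range n).reverse).map (fun p => ((s a * s b) ^ p)⁻¹ * s b) := by
  intro n
  induction n with
  | zero => simp [alternatingWord]
  | succ n ih =>
    rw [alternatingWord_succ']
    have hris : ris ((if Even n then b else a) :: alternatingWord a b n)
        = ((π (alternatingWord a b n))⁻¹ * s (if Even n then b else a)
            * π (alternatingWord a b n)) :: ris (alternatingWord a b n) := rfl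
    rw [hris, ih]
    have hg : (π (alternatingWord a b n))⁻¹ * s (if Even n then b else a)
        * π (alternatingWord a b n)
        = ((s a * s b) ^ n)⁻¹ * s b := by
      rw [← g_succ cs a b n, alternatingWord_succ' a b n, cs.wordProd_cons]
      group
    rw [hg, range_succ, reverse_append, reverse_singleton, singleton_append, map_cons]

lemma count_ris_alt_even (a b : B) (w : W) :
    Even ((ris (alternatingWord a b (2 * M a b))).count w) := by
  rw [ris_alt, map_reverse, count_reverse, two_mul, range_add, map_append, map_map]
  have : List.map ((fun p => ((s a * s b) ^ p)⁻¹ * s b) ∘ (fun x => M a b + x))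
      (range (M a b)) = List.map (fun p => ((s a * s b) ^ p)⁻¹ * s b) (range (M a b)) := by
    apply List.map_congr_left
    intro x _
    simp only [Function.comp_apply]
    rw [pow_add, cs.simple_mul_simple_pow, one_mul]
  rw [this, count_append]
  exact ⟨_, rfl⟩

lemma prod_alt_braid (a b : B) : π (alternatingWord a b (2 * M a b)) = 1 := by
  rw [cs.prod_alternatingWord_eq_mul_pow, if_pos ⟨M a b, by omega⟩]
  have : 2 * M a b / 2 = M a b := by omega
  rw [this, one_mul, cs.simple_mul_simple_pow]

lemma nu_braid (a b : B) : (nu cs a * nu cs b) ^ (M a b) = 1 := by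
  classical
  have hpow : ∀ m, ((alternatingWord a b (2*m)).map (nu cs)).prod = (nu cs a * nu cs b) ^ m := by
    intro m
    induction m with
    | zero => simp [alternatingWord]
    | succ m ih =>
      have h2 : 2 * (m + 1) = (2 * m + 1) + 1 := by omega
      rw [h2, alternatingWord_succ', alternatingWord_succ',
        if_neg (by simp [parity_simps]), if_pos ⟨m, by omega⟩]
      rw [map_cons, map_cons, prod_cons, prod_cons, ih, pow_succ']
      rw [mul_assoc]
  apply Equiv.ext
  rintro ⟨w, ε⟩
  rw [← hpow (M a b), F_apply, prod_alt_braid]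
  simp [(count_ris_alt_even cs a b w).neg_one_pow]

/-- The sign homomorphism into permutations of `W × ℤˣ`. -/
noncomputable def mu : W →* Equiv.Perm (W × ℤˣ) :=
  cs.lift ⟨fun i => nu cs i, fun a b => nu_braid cs a b⟩

lemma mu_simple (i : B) : mu cs (s i) = nu cs i :=
  cs.lift_apply_simple _ i

lemma mu_wordProd (ω : List B) : mu cs (π ω) = (ω.map (nu cs)).prod := by
  induction ω with
  | nil => simp [cs.wordProd_nil]
  | cons i δ ih => rw [cs.wordProd_cons, map_mul, mu_simple, ih, map_cons, prod_cons]

/-- The sign of `w` at `t`. -/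
noncomputable def sgn (w t : W) : ℤˣ := ((mu cs w) (t, 1)).2

lemma sgn_wordProd (ω : List B) (t : W) :
    sgn cs (π ω) t = (-1 : ℤˣ) ^ ((ris ω).count t) := by
  rw [sgn, mu_wordProd, F_apply]
  simp

lemma mu_apply (w t : W) (ε : ℤˣ) :
    (mu cs w) (t, ε) = (w * t * w⁻¹, ε * sgn cs w t) := by
  classical
  obtain ⟨ω, -, rfl⟩ := cs.exists_reduced_word' w
  rw [mu_wordProd, F_apply, sgn_wordProd]

lemma sgn_mul (w₁ w₂ t : W) :
    sgn cs (w₁ * w₂) t = sgn cs w₂ t * sgn cs w₁ (w₂ * t * w₂⁻¹) := by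
  rw [sgn, map_mul, Equiv.Perm.mul_apply, mu_apply, mu_apply, one_mul]

lemma ris_append (α β : List B) :
    ris (α ++ β) = (ris α).map (fun u => (π β)⁻¹ * u * π β) ++ ris β := by
  induction α with
  | nil => simp
  | cons x α ih =>
    have h1 : ris (x :: (α ++ β))
        = (π (α ++ β))⁻¹ * s x * π (α ++ β) :: ris (α ++ β) := rfl
    have h2 : ris (x :: α) = (π α)⁻¹ * s x * π α :: ris α := rfl
    show ris (x :: (α ++ β)) = _
    rw [h1, ih, h2, map_cons, cons_append]
    congr 1
    rw [cs.wordProd_append, mul_inv_rev]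
    group

lemma ris_getD_eq_conj_lis (ω : List B) (j : ℕ) :
    (ris ω).getD j 1 = (π ω)⁻¹ * ((lis ω).getD j 1) * π ω := by
  have h1 := cs.wordProd_mul_getD_rightInvSeq ω j
  have h2 := cs.getD_leftInvSeq_mul_wordProd ω j
  rw [← h2] at h1
  rw [mul_assoc, ← h1, ← mul_assoc, inv_mul_cancel, one_mul]

lemma map_ris_conj (ω : List B) (q : W) :
    (ris ω).map (fun u => q * u * q⁻¹)
      = (lis ω).map (fun u => (q * (π ω)⁻¹) * u * (q * (π ω)⁻¹)⁻¹) := by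
  apply List.ext_getElem
  · simp
  · intro j hj hj'
    rw [List.getElem_map, List.getElem_map]
    rw [← List.getD_eq_getElem _ 1, ← List.getD_eq_getElem _ 1]
    rw [ris_getD_eq_conj_lis]
    rw [mul_inv_rev, inv_inv]
    group

lemma count_conj_self (t : W) (htt : t * t = 1) (L : List W) :
    (L.map (fun u => t * u * t)).count t = L.count t := by
  have hinvt : t⁻¹ = t := by
    rw [← mul_one t⁻¹, ← htt, ← mul_assoc, inv_mul_cancel, one_mul]
  induction L with
  | nil => simp
  | cons u L ih =>
    rw [map_cons, count_cons, count_cons, ih]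
    have hiff : (t * u * t = t) ↔ (u = t) := by
      constructor
      · intro h
        have h2 := congrArg (fun z => t * z * t) h
        rw [show t * (t * u * t) * t = (t * t) * u * (t * t) by group, htt,
          one_mul, mul_one] at h2
        rw [h2, one_mul]
      · intro h
        rw [h, show t * t * t = (t * t) * t by group, htt, one_mul]
    simp [hiff]

lemma sgn_refl (t : W) (ht : cs.IsReflection t) : sgn cs t t = -1 := by
  obtain ⟨w0, i, rfl⟩ := ht
  obtain ⟨ρ, -, hp⟩ := cs.exists_reduced_word' w0
  subst hp
  set t := π ρ * s i * (π ρ)⁻¹ with hT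
  have htt : t * t = 1 := by
    rw [hT, show (π ρ * s i * (π ρ)⁻¹) * (π ρ * s i * (π ρ)⁻¹)
        = π ρ * (s i * s i) * (π ρ)⁻¹ by group, cs.simple_mul_simple_self]
    group
  have hπα : π (ρ ++ i :: ρ.reverse) = t := by
    rw [cs.wordProd_append, cs.wordProd_cons, cs.wordProd_reverse, hT, mul_assoc]
  have hsgn : sgn cs t t = (-1 : ℤˣ) ^ ((ris (ρ ++ i :: ρ.reverse)).count t) := by
    rw [← hπα, sgn_wordProd]
  rw [hsgn, ris_append]
  have hrisβ : ris (i :: ρ.reverse)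
      = (π ρ.reverse)⁻¹ * s i * π ρ.reverse :: ris ρ.reverse := rfl
  have hhead : (π ρ.reverse)⁻¹ * s i * π ρ.reverse = t := by
    rw [cs.wordProd_reverse, inv_inv, hT]
  have hq : (π (i :: ρ.reverse))⁻¹ = π ρ * s i := by
    rw [cs.wordProd_cons, cs.wordProd_reverse, mul_inv_rev, inv_inv, cs.inv_simple]
  rw [hrisβ, hhead, count_append, count_cons_self]
  have hmap : (ris ρ).map (fun u => (π (i :: ρ.reverse))⁻¹ * u * π (i :: ρ.reverse))
      = (lis ρ).map (fun u => t * u * t) := by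
    have := map_ris_conj cs ρ ((π (i :: ρ.reverse))⁻¹)
    rw [inv_inv] at this
    rw [this, hq]
    apply List.map_congr_left
    intro u _
    have e1 : π ρ * s i * (π ρ)⁻¹ = t := hT.symm
    rw [mul_inv_rev, mul_inv_rev, cs.inv_simple, inv_inv]
    rw [show π ρ * s i * (π ρ)⁻¹ * u * (π ρ * (s i * (π ρ)⁻¹))
        = (π ρ * s i * (π ρ)⁻¹) * u * (π ρ * s i * (π ρ)⁻¹) by group, e1]
  rw [hmap, count_conj_self t htt, cs.rightInvSeq_reverse, count_reverse]
  exact Odd.neg_one_pow ⟨(lis ρ).count t, by omega⟩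

lemma thmA : ∀ n (w t : W), ℓ w = n → cs.IsReflection t → sgn cs w t = -1
    → ℓ (w * t) < ℓ w := by
  intro n
  induction n using Nat.strong_induction_on with
  | _ n ih =>
    intro w t hlen hrefl hsgn
    obtain ⟨ω, hred, hw⟩ := cs.exists_reduced_word' w
    cases ω with
    | nil =>
      exfalso
      rw [hw, cs.wordProd_nil] at hsgn
      rw [sgn, map_one] at hsgn
      simp at hsgn
    | cons i δ =>
      subst hw
      have hδred : cs.IsReduced δ := by
        have := hred.drop 1
        simpa using this
      have hv : ℓ (π δ) = δ.length := hδred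
      have hlw : ℓ (π (i :: δ)) = δ.length + 1 := by
        rw [hred]; simp
      by_cases hti : t = (π δ)⁻¹ * s i * π δ
      · have hwt : π (i :: δ) * t = π δ := by
          rw [hti, cs.wordProd_cons,
            show (s i * π δ) * ((π δ)⁻¹ * s i * π δ) = s i * (s i * π δ) by group,
            cs.simple_mul_simple_cancel_left]
        rw [hwt, hv, hlw]
        omega
      · have hcount : (ris (i :: δ)).count t = (ris δ).count t := by
          have hris : ris (i :: δ) = ((π δ)⁻¹ * s i * π δ) :: ris δ := rfl
          have hne : ¬ (((π δ)⁻¹ * s i * π δ == t) = true) := by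
            simp only [beq_iff_eq]
            exact fun h => hti h.symm
          rw [hris, count_cons, if_neg hne, add_zero]
        have hsgnv : sgn cs (π δ) t = -1 := by
          rw [sgn_wordProd] at hsgn ⊢
          rw [hcount] at hsgn
          exact hsgn
        have hlt : ℓ (π δ * t) < ℓ (π δ) :=
          ih (δ.length) (by omega) (π δ) t hv hrefl hsgnv
        have hwteq : π (i :: δ) * t = s i * (π δ * t) := by
          rw [cs.wordProd_cons, mul_assoc]
        have hle : ℓ (s i * (π δ * t)) ≤ ℓ (π δ * t) + 1 := by
          have := cs.length_mul_le (s i) (π δ * t)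
          rwa [cs.length_simple, add_comm 1] at this
        rw [hwteq, hlw]
        omega

lemma thmB (w t : W) (hrefl : cs.IsReflection t) (hlt : ℓ (w * t) < ℓ w) :
    sgn cs w t = -1 := by
  rcases Int.units_eq_one_or (sgn cs w t) with h1 | h1
  · exfalso
    have hs : sgn cs (w * t) t = -1 := by
      rw [sgn_mul, show t * t * t⁻¹ = t by group, sgn_refl cs t hrefl, h1, mul_one]
    have := thmA cs (ℓ (w * t)) (w * t) t rfl hrefl hs
    rw [mul_assoc, hrefl.mul_self, mul_one] at this
    omega
  · exact h1

lemma mem_ris (ω : List B) (hred : cs.IsReduced ω) (t : W) (hrefl : cs.IsReflection t)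
    (hlt : ℓ (π ω * t) < ℓ (π ω)) : t ∈ ris ω := by
  have hB := thmB cs (π ω) t hrefl hlt
  rw [sgn_wordProd] at hB
  by_contra hmem
  rw [List.count_eq_zero_of_not_mem hmem, pow_zero] at hB
  simp at hB

lemma mem_lis (ω : List B) (hred : cs.IsReduced ω) (t : W) (hrefl : cs.IsReflection t)
    (hlt : ℓ (t * π ω) < ℓ (π ω)) : t ∈ lis ω := by
  have hred' : cs.IsReduced ω.reverse := (cs.isReduced_reverse_iff ω).mpr hred
  have hlt' : ℓ (π ω.reverse * t) < ℓ (π ω.reverse) := by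
    rw [cs.wordProd_reverse]
    have e1 : ℓ ((π ω)⁻¹ * t) = ℓ (t * π ω) := by
      rw [← cs.length_inv ((π ω)⁻¹ * t), mul_inv_rev, inv_inv, hrefl.inv]
    rw [e1, cs.length_inv]
    exact hlt
  have := mem_ris cs ω.reverse hred' t hrefl hlt'
  rw [cs.rightInvSeq_reverse, List.mem_reverse] at this
  exact this

lemma lis_append (α β : List B) :
    lis (α ++ β) = lis α ++ (lis β).map (fun u => π α * u * (π α)⁻¹) := by
  induction α with
  | nil => simp
  | cons x α ih =>
    show lis (x :: (α ++ β)) = _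
    have h1 : lis (x :: (α ++ β)) = s x :: (lis (α ++ β)).map (MulAut.conj (s x)) := rfl
    have h2 : lis (x :: α) = s x :: (lis α).map (MulAut.conj (s x)) := rfl
    rw [h1, ih, h2, map_append, cons_append, map_map]
    congr 1
    congr 1
    apply List.map_congr_left
    intro u _
    simp only [Function.comp_apply, MulAut.conj_apply]
    rw [cs.wordProd_cons, mul_inv_rev, cs.inv_simple]
    group

lemma len_lower (u z : W) : ℓ z ≤ ℓ (u * z) + ℓ u := by
  have h := cs.length_mul_le u⁻¹ (u * z)
  rw [inv_mul_cancel_left, cs.length_inv] at h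
  omega

lemma claimC (j : B) (y u : W) (h1 : ℓ (s j * y) = ℓ y + 1)
    (h2 : ℓ (u * s j) = ℓ u + 1) (h3 : ℓ (u * (s j * y)) + ℓ u = ℓ (s j * y)) :
    ℓ (u * y) + ℓ u = ℓ y := by
  have hlow := len_lower cs u y
  have hup : ℓ (u * y) + ℓ u ≤ ℓ y := by
    obtain ⟨ρ, hρred, hρ⟩ := cs.exists_reduced_word' u⁻¹
    obtain ⟨νl, hνred, hν⟩ := cs.exists_reduced_word' (u * (s j * y))
    have hπα : π (ρ ++ νl) = s j * y := by
      rw [cs.wordProd_append, ← hρ, ← hν, inv_mul_cancel_left]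
    have hαred : cs.IsReduced (ρ ++ νl) := by
      show ℓ (π (ρ ++ νl)) = (ρ ++ νl).length
      rw [hπα, length_append]
      have e1 : ρ.length = ℓ u := by
        rw [← hρred, ← hρ, cs.length_inv]
      have e2 : νl.length = ℓ (u * (s j * y)) := by
        rw [← hνred, ← hν]
      omega
    have hlt : ℓ (s j * π (ρ ++ νl)) < ℓ (π (ρ ++ νl)) := by
      rw [hπα, cs.simple_mul_simple_cancel_left]
      omega
    have hmem := mem_lis cs (ρ ++ νl) hαred (s j) (cs.isReflection_simple j) hlt
    rw [lis_append] at hmem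
    rcases mem_append.mp hmem with hm | hm
    · exfalso
      have hinv := (cs.isLeftInversion_of_mem_leftInvSeq hρred hm).2
      rw [← hρ] at hinv
      have e3 : ℓ (s j * u⁻¹) = ℓ (u * s j) := by
        rw [← cs.length_inv (s j * u⁻¹), mul_inv_rev, inv_inv, cs.inv_simple]
      rw [e3, cs.length_inv] at hinv
      omega
    · obtain ⟨t, htmem, hteq⟩ := mem_map.mp hm
      have ht : t = u * s j * u⁻¹ := by
        have : t = (π ρ)⁻¹ * (π ρ * t * (π ρ)⁻¹) * π ρ := by group
        rw [hteq, ← hρ, inv_inv] at this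
        rw [this]
      have hinv := (cs.isLeftInversion_of_mem_leftInvSeq hνred htmem).2
      rw [← hν] at hinv
      have e4 : t * (u * (s j * y)) = u * y := by
        rw [ht, show (u * s j * u⁻¹) * (u * (s j * y)) = u * (s j * (s j * y)) by group,
          cs.simple_mul_simple_cancel_left]
      rw [e4] at hinv
      omega
  omega

lemma exists_subtractive (τ : List B) : ∀ y : W, ∃ σ : List B, σ.Sublist τ ∧
    ℓ (π σ * y) + ℓ (π σ) = ℓ y ∧ ℓ (π σ * y) ≤ ℓ (π τ * y) := by
  induction τ using List.reverseRecOn with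
  | nil =>
    intro y
    exact ⟨[], by simp, by simp, by simp⟩
  | append_singleton δ j ih =>
    intro y
    have hτy : π (δ ++ [j]) * y = π δ * (s j * y) := by
      rw [cs.wordProd_append, cs.wordProd_singleton, mul_assoc]
    have hne := cs.length_simple_mul_ne y j
    have hdichot := cs.length_simple_mul y j
    have hcases : ℓ (s j * y) = ℓ y + 1 ∨ ℓ (s j * y) + 1 = ℓ y := by
      rcases hdichot with h | h
      · exact Or.inl h
      · right; omega
    obtain ⟨σ₀, hsub, hsum, hle⟩ := ih (s j * y)
    have hπσ : ∀ z : W, π (σ₀ ++ [j]) * z = π σ₀ * (s j * z) := by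
      intro z
      rw [cs.wordProd_append, cs.wordProd_singleton, mul_assoc]
    have hπσl : ℓ (π (σ₀ ++ [j])) = ℓ (π σ₀ * s j) := by
      rw [cs.wordProd_append, cs.wordProd_singleton]
    have hsdichot := cs.length_mul_simple (π σ₀) j
    have hsne := cs.length_mul_simple_ne (π σ₀) j
    rcases hcases with hasc | hdesc
    · by_cases hds : ℓ (π σ₀ * s j) = ℓ (π σ₀) + 1
      · have hC := claimC cs j y (π σ₀) hasc hds hsum
        refine ⟨σ₀, hsub.trans (List.sublist_append_left δ [j]), hC, ?_⟩
        rw [hτy]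
        omega
      · have hds2 : ℓ (π σ₀ * s j) + 1 = ℓ (π σ₀) := by
          rcases hsdichot with h | h
          · exact absurd h hds
          · omega
        refine ⟨σ₀ ++ [j], List.Sublist.append hsub (List.Sublist.refl _), ?_, ?_⟩
        · rw [hπσ y, hπσl]
          omega
        · rw [hπσ y, hτy]
          exact hle
    · have hds : ℓ (π σ₀ * s j) = ℓ (π σ₀) + 1 := by
        have hlb := len_lower cs (π (σ₀ ++ [j])) y
        rw [hπσ y, hπσl] at hlb
        rcases hsdichot with h | h
        · exact h
        · omega
      refine ⟨σ₀ ++ [j], List.Sublist.append hsub (List.Sublist.refl _), ?_, ?_⟩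
      · rw [hπσ y, hπσl]
        omega
      · rw [hπσ y, hτy]
        exact hle

lemma bruhatLE_refl (w : W) : cs.bruhatLE w w := by
  obtain ⟨ω, hred, hw⟩ := cs.exists_reduced_word' w
  exact ⟨ω, ω, hred, hw.symm, List.Sublist.refl ω, hw.symm⟩

lemma bruhatLE_one (x : W) : cs.bruhatLE 1 x := by
  obtain ⟨ω, hred, hw⟩ := cs.exists_reduced_word' x
  exact ⟨ω, [], hred, hw.symm, List.nil_sublist ω, cs.wordProd_nil⟩

lemma length_le_of_bruhatLE {z' z : W} (h : cs.bruhatLE z' z) : ℓ z' ≤ ℓ z := by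
  obtain ⟨ρ, ρ', hred, hπz, hsub, hπz'⟩ := h
  have h1 : ℓ z' ≤ ρ'.length := by
    rw [← hπz']; exact cs.length_wordProd_le ρ'
  have h2 : ρ'.length ≤ ρ.length := hsub.length_le
  have h3 : ρ.length = ℓ z := by rw [← hπz]; exact hred.symm
  omega

lemma eq_of_bruhatLE_of_length_ge {z' z : W} (h : cs.bruhatLE z' z)
    (hlen : ℓ z ≤ ℓ z') : z' = z := by
  obtain ⟨ρ, ρ', hred, hπz, hsub, hπz'⟩ := h
  have h1 : ℓ z' ≤ ρ'.length := by
    rw [← hπz']; exact cs.length_wordProd_le ρ'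
  have h2 : ρ'.length ≤ ρ.length := hsub.length_le
  have h3 : ρ.length = ℓ z := by rw [← hπz]; exact hred.symm
  have h4 : ρ'.length = ρ.length := by omega
  have h5 : ρ' = ρ := hsub.eq_of_length h4
  rw [← hπz', h5, hπz]

end CoxSE

/-- If `x ▷ y` is the unique minimal element of `{u * y : u ≤ x}`, then there exists
`u' ≤ x` with `x ▷ y = u' * y` and `ℓ(x ▷ y) = ℓ(y) - ℓ(u')`. -/
theorem tri_exists_length_subtractive {B W : Type*} [Group W] {M : CoxeterMatrix B} (cs : CoxeterSystem M W)
    (tri : W → W → W)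
    (htri : ∀ x y : W, cs.IsUniqueBruhatMin (cs.triSet x y) (tri x y))
    (x y : W) :
    ∃ u' : W, cs.bruhatLE u' x ∧ tri x y = u' * y ∧
      cs.length (tri x y) = cs.length y - cs.length u' := by
  obtain ⟨⟨hmem, -⟩, huniq⟩ := htri x y
  -- the set of lengths of elements of the triSet
  set A : Set ℕ := {n | ∃ z ∈ cs.triSet x y, cs.length z = n} with hA
  have hyS : y ∈ cs.triSet x y := ⟨1, CoxSE.bruhatLE_one cs x, (one_mul y).symm⟩
  have hAne : A.Nonempty := ⟨cs.length y, y, hyS, rfl⟩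
  obtain ⟨z₀, hz₀S, hz₀len⟩ := Nat.sInf_mem hAne
  have hminlen : ∀ z ∈ cs.triSet x y, sInf A ≤ cs.length z := by
    intro z hz
    exact Nat.sInf_le ⟨z, hz, rfl⟩
  -- any minimal-length element is Bruhat-minimal, hence equals `tri x y`
  have hminmin : ∀ z ∈ cs.triSet x y, cs.length z = sInf A → z = tri x y := by
    intro z hz hzlen
    apply huniq z hz
    intro z' hz' hle
    apply CoxSE.eq_of_bruhatLE_of_length_ge cs hle
    rw [hzlen]
    exact hminlen z' hz'
  have hz₀ : z₀ = tri x y := hminmin z₀ hz₀S hz₀len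
  have htrilen : cs.length (tri x y) = sInf A := by rw [← hz₀, hz₀len]
  -- get a subtractive witness below the given representation of `tri x y`
  obtain ⟨u, hu, hmuy⟩ := hmem
  obtain ⟨ω, τ, hωred, hωx, hτω, hτu⟩ := hu
  obtain ⟨σ, hστ, hsum, hle⟩ := CoxSE.exists_subtractive cs τ y
  have hu'x : cs.bruhatLE (cs.wordProd σ) x :=
    ⟨ω, σ, hωred, hωx, hστ.trans hτω, rfl⟩
  have hin : cs.wordProd σ * y ∈ cs.triSet x y := ⟨cs.wordProd σ, hu'x, rfl⟩
  have hτy : cs.length (cs.wordProd τ * y) = cs.length (tri x y) := by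
    rw [hτu, ← hmuy]
  have hgel : sInf A ≤ cs.length (cs.wordProd σ * y) := hminlen _ hin
  have hlel : cs.length (cs.wordProd σ * y) ≤ sInf A := by
    rw [← htrilen, ← hτy]
    exact hle
  have heq : cs.wordProd σ * y = tri x y :=
    hminmin _ hin (by omega)
  exact ⟨cs.wordProd σ, hu'x, heq.symm, by rw [← heq]; omega⟩
end

section
/- If s is a simple reflection and x, y elements of a Coxeter group W with sx > x, then (sx) ▷ y = min{s(x ▷ y), x ▷ y}. -/
set_option linter.unusedSectionVars false
set_option maxHeartbeats 1000000

namespace CoxAux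

open List CoxeterSystem

lemma sum_range_shift {A : Type*} [AddCommGroup A] (m : ℕ) :
    ∀ (h : ℕ → A), (∀ k, h (k + m) = h k) →
      ∀ c, ∑ k ∈ Finset.range m, h (k + c) = ∑ k ∈ Finset.range m, h k := by
  have step : ∀ (g : ℕ → A), (∀ k, g (k + m) = g k) →
      ∑ k ∈ Finset.range m, g (k + 1) = ∑ k ∈ Finset.range m, g k := by
    intro g hg
    have h1 := (Finset.sum_range_succ' g m).symm.trans (Finset.sum_range_succ g m)
    have h0 : g m = g 0 := by simpa using hg 0
    rw [h0] at h1
    exact add_right_cancel h1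
  intro h hper c
  induction c with
  | zero => simp
  | succ c ih =>
    have e1 : ∀ k : ℕ, k + (c + 1) = (k + 1) + c := by omega
    calc ∑ k ∈ Finset.range m, h (k + (c + 1))
        = ∑ k ∈ Finset.range m, (fun x => h (x + c)) (k + 1) := by
          apply Finset.sum_congr rfl; intro k _; simp only [e1]
      _ = ∑ k ∈ Finset.range m, h (k + c) := by
          apply step (fun x => h (x + c))
          intro k
          have : k + m + c = (k + c) + m := by omega
          simp only [this, hper]
      _ = ∑ k ∈ Finset.range m, h k := ih

lemma conj_eq_iff {W : Type*} [Group W] (a t v : W) :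
    a * t * a⁻¹ = v ↔ t = a⁻¹ * v * a := by
  constructor
  · intro h; rw [← h]; group
  · intro h; rw [h]; group


variable {B W : Type*} [Group W] [DecidableEq W] {M : CoxeterMatrix B} (cs : CoxeterSystem M W)

local prefix:100 "σ" => cs.simple
local prefix:100 "π" => cs.wordProd
local prefix:100 "ℓ" => cs.length

lemma simple_conj_conj (i : B) (t : W) : σ i * (σ i * t * σ i) * σ i = t := by
  have h2 : σ i * σ i = 1 := cs.simple_mul_simple_self i
  have : σ i * (σ i * t * σ i) * σ i = (σ i * σ i) * t * (σ i * σ i) := by group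
  rw [this, h2, one_mul, mul_one]

lemma simple_conj_eq_iff (i : B) (t : W) : σ i * t * σ i = σ i ↔ t = σ i := by
  have h2 : σ i * σ i = 1 := cs.simple_mul_simple_self i
  constructor
  · intro h
    have := congrArg (fun z => σ i * z * σ i) h
    simp only [simple_conj_conj] at this
    rw [this, h2, one_mul]
  · rintro rfl
    rw [h2, one_mul]

private lemma eta_invol (i : B) (x : W × ZMod 2) :
    (σ i * (σ i * x.1 * σ i) * σ i,
      (x.2 + if x.1 = σ i then 1 else 0) + if σ i * x.1 * σ i = σ i then 1 else 0) = x := by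
  obtain ⟨t, e⟩ := x
  simp only [simple_conj_conj, simple_conj_eq_iff]
  have : ∀ c : ZMod 2, e + c + c = e := by
    intro c
    rw [add_assoc, CharTwo.add_self_eq_zero, add_zero]
  by_cases h : t = σ i <;> simp [h, this]

/-- The permutation of `W × ZMod 2` attached to a simple reflection. -/
def eta (i : B) : Equiv.Perm (W × ZMod 2) where
  toFun x := (σ i * x.1 * σ i, x.2 + if x.1 = σ i then 1 else 0)
  invFun x := (σ i * x.1 * σ i, x.2 + if x.1 = σ i then 1 else 0)
  left_inv x := eta_invol cs i x
  right_inv x := eta_invol cs i x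

lemma eta_apply (i : B) (t : W) (e : ZMod 2) :
    eta cs i (t, e) = (σ i * t * σ i, e + if t = σ i then 1 else 0) := rfl


lemma conj_pow_of_invol {x a : W} (hx : x * x = 1) (n : ℕ) :
    x * a ^ n * x = (x * a * x) ^ n := by
  induction n with
  | zero => simpa using hx
  | succ n ih =>
    rw [pow_succ, pow_succ, ← ih]
    have h1 : (x * a ^ n * x) * (x * a * x) = x * a ^ n * (x * x) * (a * x) := by group
    rw [h1, hx, mul_one, ← mul_assoc]
    rw [mul_assoc (x * a ^ n) a x]

lemma simple_conj_eq_iff' (j : B) (t v : W) : σ j * t * σ j = v ↔ t = σ j * v * σ j := by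
  have h2 : σ j * σ j = 1 := cs.simple_mul_simple_self j
  constructor
  · intro h
    have := congrArg (fun z => σ j * z * σ j) h
    have this : σ j * (σ j * t * σ j) * σ j = σ j * v * σ j := this
    rw [← this]
    have : σ j * (σ j * t * σ j) * σ j = (σ j * σ j) * t * (σ j * σ j) := by group
    rw [this, h2, one_mul, mul_one]
  · rintro rfl
    have : σ j * (σ j * v * σ j) * σ j = (σ j * σ j) * v * (σ j * σ j) := by group
    rw [this, h2, one_mul, mul_one]

/-- indicator function for the parity computation -/
def indf (i j : B) (t : W) : ZMod 2 :=
  (if t = σ j then 1 else 0) + (if t = σ j * σ i * σ j then 1 else 0)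

lemma eta_mul_apply (i j : B) (t : W) (e : ZMod 2) :
    (eta cs i * eta cs j) (t, e) =
      ((σ i * σ j) * t * (σ i * σ j)⁻¹, e + indf cs i j t) := by
  rw [Equiv.Perm.mul_apply, eta_apply, eta_apply]
  have h1 : σ i * (σ j * t * σ j) * σ i = (σ i * σ j) * t * (σ i * σ j)⁻¹ := by
    rw [mul_inv_rev, cs.inv_simple, cs.inv_simple]; group
  have h2 : (σ j * t * σ j = σ i) ↔ (t = σ j * σ i * σ j) := simple_conj_eq_iff' cs j t (σ i)
  rw [h1]
  congr 1
  rw [indf, ← add_assoc]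
  congr 1
  exact if_congr h2 rfl rfl

lemma eta_pow_apply (i j : B) (n : ℕ) (t : W) (e : ZMod 2) :
    ((eta cs i * eta cs j) ^ n) (t, e) =
      ((σ i * σ j) ^ n * t * ((σ i * σ j) ^ n)⁻¹,
        e + ∑ k ∈ Finset.range n,
          indf cs i j ((σ i * σ j) ^ k * t * ((σ i * σ j) ^ k)⁻¹)) := by
  induction n generalizing t e with
  | zero => simp
  | succ n ih =>
    rw [pow_succ, Equiv.Perm.mul_apply, eta_mul_apply, ih]
    set q := σ i * σ j with hq
    congr 1
    · rw [show q ^ n * (q * t * q⁻¹) * (q ^ n)⁻¹ = (q ^ n * q) * t * ((q ^ n * q))⁻¹ by group,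
        ← pow_succ]
    · rw [Finset.sum_range_succ' (fun k => indf cs i j (q ^ k * t * (q ^ k)⁻¹)) n]
      simp only [pow_zero, one_mul, inv_one, mul_one]
      rw [add_comm (∑ k ∈ Finset.range n, indf cs i j (q ^ (k+1) * t * (q ^ (k+1))⁻¹))
        (indf cs i j t), ← add_assoc]
      congr 1
      apply Finset.sum_congr rfl
      intro k _
      have hh : q ^ k * (q * t * q⁻¹) * (q ^ k)⁻¹ = q ^ (k + 1) * t * (q ^ (k + 1))⁻¹ := by
        rw [pow_succ]; group
      rw [hh]

section Parity

variable (i j : B)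

private lemma hjq : σ j * (σ i * σ j) * σ j = (σ i * σ j)⁻¹ := by
  rw [mul_inv_rev, cs.inv_simple, cs.inv_simple]
  have h1 : σ j * (σ i * σ j) * σ j = (σ j * σ i) * (σ j * σ j) := by group
  rw [h1, cs.simple_mul_simple_self, mul_one]

private lemma hiq : σ i * (σ i * σ j) * σ i = (σ i * σ j)⁻¹ := by
  rw [mul_inv_rev, cs.inv_simple, cs.inv_simple]
  have h1 : σ i * (σ i * σ j) * σ i = (σ i * σ i) * (σ j * σ i) := by group
  rw [h1, cs.simple_mul_simple_self, one_mul]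

private lemma hrr : (σ j * σ i * σ j) * (σ j * σ i * σ j) = 1 := by
  have h1 : (σ j * σ i * σ j) * (σ j * σ i * σ j) = σ j * σ i * (σ j * σ j) * (σ i * σ j) := by
    group
  rw [h1, cs.simple_mul_simple_self, mul_one]
  have h2 : σ j * σ i * (σ i * σ j) = σ j * (σ i * σ i) * σ j := by group
  rw [h2, cs.simple_mul_simple_self, mul_one, cs.simple_mul_simple_self]

private lemma hrq : (σ j * σ i * σ j) * (σ i * σ j) * (σ j * σ i * σ j) = (σ i * σ j)⁻¹ := by
  rw [mul_inv_rev, cs.inv_simple, cs.inv_simple]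
  have h1 : (σ j * σ i * σ j) * (σ i * σ j) * (σ j * σ i * σ j)
      = σ j * σ i * σ j * σ i * (σ j * σ j) * (σ i * σ j) := by group
  rw [h1, cs.simple_mul_simple_self, mul_one]
  have h2 : σ j * σ i * σ j * σ i * (σ i * σ j) = σ j * σ i * σ j * (σ i * σ i) * σ j := by group
  rw [h2, cs.simple_mul_simple_self, mul_one]
  have h3 : σ j * σ i * σ j * σ j = σ j * σ i * (σ j * σ j) := by group
  rw [h3, cs.simple_mul_simple_self, mul_one]

private lemma hr2 : (σ i * σ j)⁻¹ * σ i * (σ i * σ j) = σ j * σ i * σ j := by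
  rw [mul_inv_rev, cs.inv_simple, cs.inv_simple]
  have h1 : σ j * σ i * σ i * (σ i * σ j) = σ j * (σ i * σ i) * (σ i * σ j) := by group
  rw [h1, cs.simple_mul_simple_self, mul_one]
  have h2 : σ j * (σ i * σ j) = σ j * σ i * σ j := by group
  rw [h2]

lemma indf_sum (t : W) :
    ∑ k ∈ Finset.range (M i j),
      indf cs i j ((σ i * σ j) ^ k * t * ((σ i * σ j) ^ k)⁻¹) = 0 := by
  set q : W := σ i * σ j with hqd
  set m := M i j with hm
  have hq : q ^ m = 1 := cs.simple_mul_simple_pow i j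
  have hqper : ∀ (v : W) (k : ℕ), q ^ (k + m) * v * (q ^ (k + m))⁻¹ = q ^ k * v * (q ^ k)⁻¹ := by
    intro v k
    rw [pow_add, hq, mul_one]
  have hjj : σ j * σ j = 1 := cs.simple_mul_simple_self j
  have hjqn : ∀ n, σ j * q ^ n * σ j = (q ^ n)⁻¹ := fun n => by
    rw [conj_pow_of_invol hjj n, hjq, inv_pow]
  have hrqn : ∀ n, (σ j * σ i * σ j) * q ^ n * (σ j * σ i * σ j) = (q ^ n)⁻¹ := fun n => by
    rw [conj_pow_of_invol (hrr cs i j) n, hrq, inv_pow]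
  have conj_fix : ∀ (v : W) (n : ℕ), v * v = 1 → v * q ^ n * v = (q ^ n)⁻¹ → q ^ (n + n) = 1 →
      (q ^ n)⁻¹ * v * q ^ n = v := by
    intro v n hv hvq h2
    rw [show (q ^ n)⁻¹ = v * q ^ n * v from hvq.symm]
    have e1 : v * q ^ n * v * v * q ^ n = v * q ^ n * (v * v) * q ^ n := by group
    rw [e1, hv, mul_one, mul_assoc, ← pow_add, h2, mul_one]
  have cond_shift : ∀ (v : W) (n k : ℕ), (q ^ n)⁻¹ * v * q ^ n = v →
      ((q ^ (k + n) * t * (q ^ (k + n))⁻¹ = v) ↔ (q ^ k * t * (q ^ k)⁻¹ = v)) := by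
    intro v n k hfix
    rw [conj_eq_iff, conj_eq_iff]
    have e1 : (q ^ (k + n))⁻¹ * v * q ^ (k + n) = (q ^ k)⁻¹ * ((q ^ n)⁻¹ * v * q ^ n) * q ^ k := by
      rw [show k + n = n + k from Nat.add_comm k n, pow_add, mul_inv_rev]
      group
    rw [e1, hfix]
  rcases Nat.even_or_odd m with ⟨n, h2n⟩ | ⟨n, h2n⟩
  · -- even case
    have h2 : q ^ (n + n) = 1 := by rw [← h2n, hq]
    have fixj : (q ^ n)⁻¹ * σ j * q ^ n = σ j := conj_fix _ n hjj (hjqn n) h2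
    have fixr : (q ^ n)⁻¹ * (σ j * σ i * σ j) * q ^ n = σ j * σ i * σ j :=
      conj_fix _ n (hrr cs i j) (hrqn n) h2
    have hshift : ∀ k, indf cs i j (q ^ (k + n) * t * (q ^ (k + n))⁻¹)
        = indf cs i j (q ^ k * t * (q ^ k)⁻¹) := by
      intro k
      unfold indf
      congr 1
      · exact if_congr (cond_shift _ n k fixj) rfl rfl
      · exact if_congr (cond_shift _ n k fixr) rfl rfl
    rw [h2n, Finset.sum_range_add]
    have e2 : ∑ x ∈ Finset.range n, indf cs i j (q ^ (n + x) * t * (q ^ (n + x))⁻¹)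
        = ∑ x ∈ Finset.range n, indf cs i j (q ^ x * t * (q ^ x)⁻¹) := by
      apply Finset.sum_congr rfl
      intro x _
      rw [Nat.add_comm n x]
      exact hshift x
    rw [e2, CharTwo.add_self_eq_zero]
  · -- odd case
    have hq2n : q ^ (n + n) = q⁻¹ := by
      have h1 : q ^ (n + n) * q = 1 := by
        rw [← pow_succ, show n + n + 1 = m from by omega, hq]
      exact mul_eq_one_iff_eq_inv.mp h1
    have hkey : (q ^ n)⁻¹ * σ j * q ^ n = σ i := by
      rw [show (q ^ n)⁻¹ = σ j * q ^ n * σ j from (hjqn n).symm]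
      have e1 : σ j * q ^ n * σ j * σ j * q ^ n = σ j * q ^ n * (σ j * σ j) * q ^ n := by group
      rw [e1, hjj, mul_one, mul_assoc, ← pow_add, hq2n, hqd, mul_inv_rev,
        cs.inv_simple, cs.inv_simple, ← mul_assoc, hjj, one_mul]
    set A : ℕ → ZMod 2 := fun k => if q ^ k * t * (q ^ k)⁻¹ = σ j then 1 else 0 with hA
    set Bf : ℕ → ZMod 2 := fun k => if q ^ k * t * (q ^ k)⁻¹ = σ j * σ i * σ j then 1 else 0
      with hB
    set A' : ℕ → ZMod 2 := fun k => if q ^ k * t * (q ^ k)⁻¹ = σ i then 1 else 0 with hA'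
    have hsplit : ∀ k, indf cs i j (q ^ k * t * (q ^ k)⁻¹) = A k + Bf k := fun k => rfl
    have hAper : ∀ k, A (k + m) = A k := fun k => by
      simp only [hA, hqper]
    have hA'per : ∀ k, A' (k + m) = A' k := fun k => by
      simp only [hA', hqper]
    have hBA' : ∀ k, Bf k = A' (k + 1) := by
      intro k
      simp only [hB, hA']
      apply if_congr _ rfl rfl
      rw [conj_eq_iff, conj_eq_iff]
      have e1 : (q ^ (k + 1))⁻¹ * σ i * q ^ (k + 1) = (q ^ k)⁻¹ * (q⁻¹ * σ i * q) * q ^ k := by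
        rw [pow_succ, mul_inv_rev]; group
      rw [e1, show q⁻¹ * σ i * q = σ j * σ i * σ j from by rw [hqd]; exact hr2 cs i j]
    have hA'A : ∀ k, A' k = A (k + n) := by
      intro k
      simp only [hA', hA]
      apply if_congr _ rfl rfl
      rw [conj_eq_iff, conj_eq_iff]
      have e1 : (q ^ (k + n))⁻¹ * σ j * q ^ (k + n)
          = (q ^ k)⁻¹ * ((q ^ n)⁻¹ * σ j * q ^ n) * q ^ k := by
        rw [show k + n = n + k from Nat.add_comm k n, pow_add, mul_inv_rev]; group
      rw [e1, hkey]
    calc ∑ k ∈ Finset.range m, indf cs i j (q ^ k * t * (q ^ k)⁻¹)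
        = ∑ k ∈ Finset.range m, (A k + Bf k) := Finset.sum_congr rfl fun k _ => hsplit k
      _ = ∑ k ∈ Finset.range m, A k + ∑ k ∈ Finset.range m, Bf k := Finset.sum_add_distrib
      _ = ∑ k ∈ Finset.range m, A k + ∑ k ∈ Finset.range m, A' (k + 1) := by
          rw [Finset.sum_congr rfl fun k _ => hBA' k]
      _ = ∑ k ∈ Finset.range m, A k + ∑ k ∈ Finset.range m, A' k := by
          rw [sum_range_shift m A' hA'per 1]
      _ = ∑ k ∈ Finset.range m, A k + ∑ k ∈ Finset.range m, A (k + n) := by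
          rw [Finset.sum_congr rfl fun k _ => hA'A k]
      _ = ∑ k ∈ Finset.range m, A k + ∑ k ∈ Finset.range m, A k := by
          rw [sum_range_shift m A hAper n]
      _ = 0 := CharTwo.add_self_eq_zero _

lemma eta_liftable : M.IsLiftable (fun i => eta cs i) := by
  intro i j
  apply Equiv.ext
  rintro ⟨t, e⟩
  rw [Equiv.Perm.one_apply, eta_pow_apply, indf_sum, cs.simple_mul_simple_pow i j]
  simp

/-- The reflection representation on `W × ZMod 2`. -/
noncomputable def theta : W →* Equiv.Perm (W × ZMod 2) :=
  cs.lift ⟨fun i => eta cs i, eta_liftable cs⟩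

lemma theta_simple (i : B) : theta cs (σ i) = eta cs i :=
  cs.lift_apply_simple (eta_liftable cs) i

lemma theta_wordProd (ω : List B) (t : W) (e : ZMod 2) :
    theta cs (π ω) (t, e) =
      (π ω * t * (π ω)⁻¹, e + (List.count t (cs.rightInvSeq ω) : ZMod 2)) := by
  induction ω generalizing t e with
  | nil => simp [theta]
  | cons a ω ih =>
    rw [wordProd_cons, map_mul, Equiv.Perm.mul_apply, ih, theta_simple, eta_apply]
    have hris : cs.rightInvSeq (a :: ω) = ((π ω)⁻¹ * σ a * π ω) :: cs.rightInvSeq ω := rfl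
    rw [hris, List.count_cons]
    have h1 : σ a * (π ω * t * (π ω)⁻¹) * σ a = (σ a * π ω) * t * ((σ a * π ω))⁻¹ := by
      rw [mul_inv_rev, cs.inv_simple]; group
    rw [h1]
    congr 1
    have h2 : (π ω * t * (π ω)⁻¹ = σ a) ↔ ((π ω)⁻¹ * σ a * π ω = t) := by
      rw [conj_eq_iff]; exact eq_comm
    simp only [beq_iff_eq]
    push_cast
    rw [add_assoc]
    congr 1
    rw [if_congr h2 rfl rfl]

/-- parity invariant : `n2 cs u t` is the parity of the number of times `t` occurs in the
right inversion sequence of any word for `u`. -/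
noncomputable def n2 (u t : W) : ZMod 2 := (theta cs u (t, 0)).2

lemma n2_eq_count (ω : List B) (t : W) :
    n2 cs (π ω) t = (List.count t (cs.rightInvSeq ω) : ZMod 2) := by
  rw [n2, theta_wordProd]; simp

lemma theta_apply_eq (u t : W) (e : ZMod 2) :
    theta cs u (t, e) = (u * t * u⁻¹, e + n2 cs u t) := by
  obtain ⟨ω, rfl⟩ := cs.wordProd_surjective u
  rw [theta_wordProd, n2_eq_count]

lemma n2_refl_one (δ : List B) (c : B) :
    n2 cs (π δ * σ c * (π δ)⁻¹) (π δ * σ c * (π δ)⁻¹) = 1 := by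
  induction δ with
  | nil =>
    rw [wordProd_nil, one_mul, inv_one, mul_one, n2, theta_simple, eta_apply]
    simp
  | cons a δ ih =>
    rw [wordProd_cons]
    set v := π δ with hv
    set t' := v * σ c * v⁻¹ with ht'
    have h1 : σ a * v * σ c * (σ a * v)⁻¹ = σ a * t' * σ a := by
      rw [mul_inv_rev, cs.inv_simple, ht']; group
    have e1 : eta cs a (σ a * t' * σ a, 0) = (t', if t' = σ a then 1 else 0) := by
      rw [eta_apply, simple_conj_conj]
      congr 1
      rw [zero_add, if_congr (simple_conj_eq_iff cs a t') rfl rfl]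
    have e2 : ∀ e : ZMod 2, theta cs t' (t', e) = (t', e + 1) := by
      intro e
      rw [theta_apply_eq, ih, show t' * t' * t'⁻¹ = t' from by group]
    rw [h1, n2, map_mul, map_mul, Equiv.Perm.mul_apply, Equiv.Perm.mul_apply,
      theta_simple, e1, e2, eta_apply]
    by_cases hc : t' = σ a <;> simp [hc] <;> decide

lemma n2_refl {t : W} (ht : cs.IsReflection t) : n2 cs t t = 1 := by
  obtain ⟨w, c, rfl⟩ := ht
  obtain ⟨ω, rfl⟩ := cs.wordProd_surjective w
  exact n2_refl_one cs ω c

lemma n2_mul_reflection (w : W) {t : W} (ht : cs.IsReflection t) :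
    n2 cs (w * t) t = 1 + n2 cs w t := by
  rw [n2, map_mul, Equiv.Perm.mul_apply, theta_apply_eq cs t t 0, n2_refl cs ht,
    show t * t * t⁻¹ = t from by group, theta_apply_eq]
  rw [zero_add, add_comm]

lemma n2_eq_zero_of_lt (v : W) {t : W} (ht : cs.IsReflection t) (h : ℓ v < ℓ (v * t)) :
    n2 cs v t = 0 := by
  obtain ⟨ω, hred, hw⟩ := cs.exists_reduced_word' v
  rw [hw, n2_eq_count]
  suffices hc : List.count t (cs.rightInvSeq ω) = 0 by rw [hc]; simp
  rw [List.count_eq_zero]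
  intro hmem
  obtain ⟨k, hk, hget⟩ := List.getElem_of_mem hmem
  have hk' : k < ω.length := by
    have := cs.length_rightInvSeq ω; omega
  have hgd : (cs.rightInvSeq ω).getD k 1 = t := by
    rw [List.getD_eq_getElem _ _ hk, hget]
  have heq := cs.wordProd_mul_getD_rightInvSeq ω k
  rw [hgd] at heq
  have hlen : ℓ (π (ω.eraseIdx k)) ≤ (ω.eraseIdx k).length := cs.length_wordProd_le _
  rw [← heq] at hlen
  rw [List.length_eraseIdx] at hlen
  simp only [hk', if_true] at hlen
  rw [← hw] at hlen
  have hων : ω.length = ℓ v := by rw [hw]; exact hred.symm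
  omega

/-- Strong exchange property (right version). -/
lemma strong_exchange (ω : List B) {t : W} (ht : cs.IsReflection t)
    (h : ℓ (π ω * t) < ℓ (π ω)) : ∃ k < ω.length, π (ω.eraseIdx k) = π ω * t := by
  have hsq : π ω * t * t = π ω := by rw [mul_assoc, ht.mul_self, mul_one]
  have h1 : n2 cs (π ω) t = 1 := by
    have h2 := n2_mul_reflection cs (π ω * t) ht
    rw [hsq] at h2
    have h0 : n2 cs (π ω * t) t = 0 := n2_eq_zero_of_lt cs _ ht (by rwa [hsq])
    rw [h2, h0, add_zero]
  rw [n2_eq_count] at h1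
  have hcnt : List.count t (cs.rightInvSeq ω) ≠ 0 := by
    intro h0; rw [h0] at h1; simp at h1
  have hmem : t ∈ cs.rightInvSeq ω := by
    rw [← List.count_pos_iff]  -- maybe different name
    omega
  obtain ⟨k, hk, hget⟩ := List.getElem_of_mem hmem
  have hk' : k < ω.length := by have := cs.length_rightInvSeq ω; omega
  refine ⟨k, hk', ?_⟩
  have hgd : (cs.rightInvSeq ω).getD k 1 = t := by
    rw [List.getD_eq_getElem _ _ hk, hget]
  have heq := cs.wordProd_mul_getD_rightInvSeq ω k
  rw [hgd] at heq
  exact heq.symm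

/-- Deletion property: every word has a reduced sublist with the same product. -/
lemma exists_reduced_sublist : ∀ (n : ℕ) (ω : List B), ω.length ≤ n →
    ∃ σw, σw.Sublist ω ∧ cs.IsReduced σw ∧ π σw = π ω := by
  intro n
  induction n with
  | zero =>
    intro ω hlen
    have : ω = [] := List.eq_nil_of_length_eq_zero (by omega)
    subst this
    exact ⟨[], List.Sublist.refl _, by simp [CoxeterSystem.IsReduced], rfl⟩
  | succ n ih =>
    intro ω hlen
    by_cases hred : cs.IsReduced ω
    · exact ⟨ω, List.Sublist.refl ω, hred, rfl⟩
    rcases List.eq_nil_or_concat ω with rfl | ⟨ω', a, rfl⟩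
    · exact absurd (by simp [CoxeterSystem.IsReduced]) hred
    rw [List.concat_eq_append] at *
    have hω'n : ω'.length ≤ n := by
      rw [List.length_append] at hlen; simp at hlen; omega
    by_cases hred' : cs.IsReduced ω'
    · -- ω' reduced, ω = ω' ++ [a] not reduced
      have hlt : ℓ (π ω' * σ a) < ℓ (π ω') := by
        rcases cs.length_mul_simple (π ω') a with h | h
        · exfalso
          apply hred
          show ℓ (π (ω' ++ [a])) = (ω' ++ [a]).length
          rw [wordProd_append, wordProd_singleton, h, hred']
          simp
        · have := cs.length_mul_simple_ne (π ω') a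
          omega
      obtain ⟨k, hk, hke⟩ := strong_exchange cs ω' (cs.isReflection_simple a) hlt
      obtain ⟨σw, h1, h2, h3⟩ := ih (ω'.eraseIdx k) (by
        have := List.length_eraseIdx (l := ω') (i := k); simp [hk] at this; omega)
      refine ⟨σw, h1.trans ((List.eraseIdx_sublist ω' k).trans
        (List.sublist_append_left ω' [a])), h2, ?_⟩
      rw [h3, hke, wordProd_append, wordProd_singleton]
    · -- ω' not reduced : shrink it first
      obtain ⟨ρ, hρ1, hρ2, hρ3⟩ := ih ω' hω'n
      have hρlt : ρ.length < ω'.length := by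
        have h1 : ℓ (π ρ) = ρ.length := hρ2
        have h2 : ℓ (π ω') ≤ ω'.length := cs.length_wordProd_le ω'
        have h3 : ℓ (π ω') ≠ ω'.length := hred'
        rw [hρ3] at h1
        omega
      obtain ⟨σw, h1, h2, h3⟩ := ih (ρ ++ [a]) (by
        rw [List.length_append]; simp; omega)
      refine ⟨σw, h1.trans (List.Sublist.append hρ1 (List.Sublist.refl [a])), h2, ?_⟩
      rw [h3, wordProd_append, wordProd_append, hρ3]

lemma exists_reduced_sublist' (ω : List B) :
    ∃ σw, σw.Sublist ω ∧ cs.IsReduced σw ∧ π σw = π ω :=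
  exists_reduced_sublist cs ω.length ω le_rfl

/-- A single step in the Bruhat chain order. -/
def cstep (v w : W) : Prop := ∃ t, cs.IsReflection t ∧ w = v * t ∧ ℓ v < ℓ w

/-- The Bruhat chain order. -/
def cle : W → W → Prop := Relation.ReflTransGen (cstep cs)

/-- Chain order implies a reduced subword of every reduced word. -/
lemma cle_subword {u w : W} (h : cle cs u w) :
    ∀ ω, cs.IsReduced ω → π ω = w → ∃ σw, σw.Sublist ω ∧ cs.IsReduced σw ∧ π σw = u := by
  induction h with
  | refl => exact fun ω hr hp => ⟨ω, List.Sublist.refl ω, hr, hp⟩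
  | @tail v w' hs hstep ih =>
    intro ω hr hp
    obtain ⟨t, htr, hw, hlt⟩ := hstep
    have hvt : π ω * t = v := by rw [hp, hw, mul_assoc, htr.mul_self, mul_one]
    have hld : ℓ (π ω * t) < ℓ (π ω) := by rw [hvt, hp]; rw [hw] at hlt ⊢; exact hlt
    obtain ⟨k, hk, hke⟩ := strong_exchange cs ω htr hld
    obtain ⟨ρ, hρ1, hρ2, hρ3⟩ := exists_reduced_sublist' cs (ω.eraseIdx k)
    obtain ⟨σw, h1, h2, h3⟩ := ih ρ hρ2 (by rw [hρ3, hke, hvt])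
    exact ⟨σw, h1.trans (hρ1.trans (List.eraseIdx_sublist ω k)), h2, h3⟩

lemma length_mul_simple_up {w : W} {i : B} (h : ℓ w < ℓ (w * σ i)) :
    ℓ (w * σ i) = ℓ w + 1 := by
  rcases cs.length_mul_simple w i with h1 | h1 <;> omega

lemma length_mul_simple_down {w : W} {i : B} (h : ℓ (w * σ i) < ℓ w) :
    ℓ (w * σ i) + 1 = ℓ w := by
  rcases cs.length_mul_simple w i with h1 | h1 <;> omega

lemma conj_simple_reflection {t : W} (ht : cs.IsReflection t) (i : B) :
    cs.IsReflection (σ i * t * σ i) := by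
  have := ht.conj (σ i)
  rwa [cs.inv_simple] at this

/-- The two lifting properties for the chain order, proved by joint induction. -/
lemma lift_pair : ∀ (n : ℕ) (w : W), ℓ w ≤ n → ∀ (v : W) (i : B), cle cs v w →
    ((ℓ w < ℓ (w * σ i) → ℓ v < ℓ (v * σ i) → cle cs (v * σ i) (w * σ i)) ∧
     (ℓ (w * σ i) < ℓ w → ℓ v < ℓ (v * σ i) → cle cs (v * σ i) w)) := by
  intro n
  induction n using Nat.strong_induction_on with
  | _ n ih =>
  intro w hwn v i hvw
  constructor
  · -- lift up
    intro hws hvs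
    rcases Relation.ReflTransGen.cases_tail hvw with heq | ⟨p, hvp, t, htr, hwpt, hlt⟩
    · subst heq; exact Relation.ReflTransGen.refl
    have hpn : ℓ p < n := by omega
    rcases Nat.lt_or_ge (ℓ p) (ℓ (p * σ i)) with hps | hps'
    · have ihp := (ih (ℓ p) hpn p le_rfl v i hvp).1 hps hvs
      refine ihp.tail ⟨σ i * t * σ i, conj_simple_reflection cs htr i, ?_, ?_⟩
      · have e1 : (p * σ i) * (σ i * t * σ i) = p * (σ i * σ i) * (t * σ i) := by group
        rw [e1, cs.simple_mul_simple_self, mul_one, ← mul_assoc, ← hwpt]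
      · have h1 := length_mul_simple_up cs hps
        have h2 := length_mul_simple_up cs hws
        omega
    · have hps : ℓ (p * σ i) < ℓ p := by
        have := cs.length_mul_simple_ne p i; omega
      have ihp := (ih (ℓ p) hpn p le_rfl v i hvp).2 hps hvs
      exact (ihp.tail ⟨t, htr, hwpt, hlt⟩).tail ⟨σ i, cs.isReflection_simple i, rfl, hws⟩
  · -- lift down
    intro hws hvs
    rcases Relation.ReflTransGen.cases_tail hvw with heq | ⟨p, hvp, t, htr, hwpt, hlt⟩
    · exfalso; subst heq; omega
    have hpn : ℓ p < n := by omega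
    rcases Nat.lt_or_ge (ℓ p) (ℓ (p * σ i)) with hps | hps'
    · have ihp := (ih (ℓ p) hpn p le_rfl v i hvp).1 hps hvs
      -- need : p * σ i ≤c w
      by_cases hpw : p * σ i = w
      · rwa [hpw] at ihp
      have hrefl2 := conj_simple_reflection cs htr i
      have hwseq : w * σ i = (p * σ i) * (σ i * t * σ i) := by
        have e1 : (p * σ i) * (σ i * t * σ i) = p * (σ i * σ i) * (t * σ i) := by group
        rw [e1, cs.simple_mul_simple_self, mul_one, ← mul_assoc, ← hwpt]
      have hne : ℓ (w * σ i) ≠ ℓ (p * σ i) := by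
        rw [hwseq]; exact hrefl2.length_mul_left_ne (p * σ i)
      rcases Nat.lt_or_ge (ℓ (p * σ i)) (ℓ (w * σ i)) with hlt2 | hgt
      · refine (ihp.tail ⟨σ i * t * σ i, hrefl2, hwseq, hlt2⟩).tail
          ⟨σ i, cs.isReflection_simple i, ?_, hws⟩
        rw [mul_assoc, cs.simple_mul_simple_self, mul_one]
      · exfalso
        have hgt' : ℓ (w * σ i) < ℓ (p * σ i) := by omega
        have h1 := length_mul_simple_up cs hps
        have h2 := length_mul_simple_down cs hws
        -- so ℓ (w σ i) = ℓ p and ℓ w = ℓ p + 1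
        obtain ⟨ρ, hρr, hρp⟩ := cs.exists_reduced_word' (w * σ i)
        have hρlen : ρ.length = ℓ (w * σ i) := by rw [← hρr, ← hρp]
        have hconc : π (ρ ++ [i]) = w := by
          rw [wordProd_append, wordProd_singleton, ← hρp, mul_assoc,
            cs.simple_mul_simple_self, mul_one]
        have hcred : cs.IsReduced (ρ ++ [i]) := by
          show ℓ (π (ρ ++ [i])) = (ρ ++ [i]).length
          rw [hconc, List.length_append]
          simp only [List.length_singleton]
          omega
        have hwt : w * t = p := by rw [hwpt, mul_assoc, htr.mul_self, mul_one]
        have hld : ℓ (π (ρ ++ [i]) * t) < ℓ (π (ρ ++ [i])) := by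
          rw [hconc, hwt]; exact hlt
        obtain ⟨k, hk, hke⟩ := strong_exchange cs (ρ ++ [i]) htr hld
        rw [hconc, hwt] at hke
        by_cases hkl : k < ρ.length
        · rw [List.eraseIdx_append_of_lt_length hkl [i]] at hke
          -- p = π (ρ.eraseIdx k) * σ i
          have : p * σ i = π (ρ.eraseIdx k) := by
            rw [← hke, wordProd_append, wordProd_singleton, mul_assoc,
              cs.simple_mul_simple_self, mul_one]
          have hle : ℓ (p * σ i) ≤ (ρ.eraseIdx k).length := by
            rw [this]; exact cs.length_wordProd_le _
          have := List.length_eraseIdx (l := ρ) (i := k)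
          simp [hkl] at this
          omega
        · -- k = ρ.length : erase the final i
          have hkeq : k = ρ.length := by
            rw [List.length_append] at hk; simp at hk; omega
          have : (ρ ++ [i]).eraseIdx k = ρ := by
            subst hkeq
            rw [List.eraseIdx_append_of_length_le (le_refl ρ.length)]
            simp
          rw [this, ← hρp] at hke
          -- p = w * σ i, so p * σ i = w, contradiction with hpw
          apply hpw
          rw [← hke, mul_assoc, cs.simple_mul_simple_self, mul_one]
    · have hps : ℓ (p * σ i) < ℓ p := by
        have := cs.length_mul_simple_ne p i; omega
      have ihp := (ih (ℓ p) hpn p le_rfl v i hvp).2 hps hvs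
      exact ihp.tail ⟨t, htr, hwpt, hlt⟩

/-- Subword implies chain order. -/
lemma sublist_cle : ∀ (ω : List B), cs.IsReduced ω →
    ∀ σw, σw.Sublist ω → cle cs (π σw) (π ω) := by
  intro ω
  induction ω using List.reverseRecOn with
  | nil =>
    intro _ σw hsub
    rw [List.sublist_nil.mp hsub]
    exact Relation.ReflTransGen.refl
  | append_singleton ω₁ a ih =>
    intro hred σw hsub
    have hred₁ : cs.IsReduced ω₁ := by
      have := hred.take ω₁.length
      rwa [List.take_left] at this
    have hlen : ℓ (π (ω₁ ++ [a])) = ω₁.length + 1 := by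
      rw [hred]; simp
    have hlen₁ : ℓ (π ω₁) = ω₁.length := hred₁
    have hstep : cstep cs (π ω₁) (π (ω₁ ++ [a])) :=
      ⟨σ a, cs.isReflection_simple a, by rw [wordProd_append, wordProd_singleton], by omega⟩
    rcases List.sublist_append_iff.mp hsub with ⟨l₁, l₂, rfl, h₁, h₂⟩
    rcases List.sublist_singleton.mp h₂ with rfl | rfl
    · rw [List.append_nil]
      exact (ih hred₁ l₁ h₁).tail hstep
    · have ihc : cle cs (π l₁) (π ω₁) := ih hred₁ l₁ h₁
      rw [wordProd_append, wordProd_singleton]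
      rcases Nat.lt_or_ge (ℓ (π l₁)) (ℓ (π l₁ * σ a)) with hup | hdown
    -- up case : use the lifting lemma
      · have e : π ω₁ * σ a = π (ω₁ ++ [a]) := by
          rw [wordProd_append, wordProd_singleton]
        have h := (lift_pair cs (ℓ (π ω₁)) (π ω₁) le_rfl (π l₁) a ihc).1
          (by rw [e]; omega) hup
        rwa [e] at h
      · have hdown' : ℓ (π l₁ * σ a) < ℓ (π l₁) := by
          have := cs.length_mul_simple_ne (π l₁) a; omega
        have step1 : cstep cs (π l₁ * σ a) (π l₁) :=
          ⟨σ a, cs.isReflection_simple a,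
            by rw [mul_assoc, cs.simple_mul_simple_self, mul_one], hdown'⟩
        exact ((Relation.ReflTransGen.single step1).trans ihc).tail hstep

lemma bruhatLE_iff_cle (u w : W) : cs.bruhatLE u w ↔ cle cs u w := by
  constructor
  · rintro ⟨ω, ω', hred, hπ, hsub, hπ'⟩
    rw [← hπ, ← hπ']
    exact sublist_cle cs ω hred ω' hsub
  · intro h
    obtain ⟨ω, hred, hπ⟩ := cs.exists_reduced_word' w
    obtain ⟨σw, h1, h2, h3⟩ := cle_subword cs h ω hred hπ.symm
    exact ⟨ω, σw, hred, hπ.symm, h1, h3⟩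

lemma bruhatLE_refl (w : W) : cs.bruhatLE w w :=
  (bruhatLE_iff_cle cs w w).mpr Relation.ReflTransGen.refl

lemma bruhatLE_trans {u v w : W} (h1 : cs.bruhatLE u v) (h2 : cs.bruhatLE v w) :
    cs.bruhatLE u w :=
  (bruhatLE_iff_cle cs u w).mpr
    (((bruhatLE_iff_cle cs u v).mp h1).trans ((bruhatLE_iff_cle cs v w).mp h2))

omit [DecidableEq W] in
lemma bruhatLE_length_le {u w : W} (h : cs.bruhatLE u w) : ℓ u ≤ ℓ w := by
  obtain ⟨ω, ω', hred, hπ, hsub, hπ'⟩ := h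
  have h1 : ℓ (π ω') ≤ ω'.length := cs.length_wordProd_le ω'
  have h2 : ω'.length ≤ ω.length := hsub.length_le
  have h3 : ℓ (π ω) = ω.length := hred
  rw [hπ'] at h1
  rw [hπ] at h3
  omega

omit [DecidableEq W] in
lemma bruhatLE_eq_of_length_ge {u w : W} (h : cs.bruhatLE u w) (hl : ℓ w ≤ ℓ u) : u = w := by
  obtain ⟨ω, ω', hred, hπ, hsub, hπ'⟩ := h
  have h1 : ℓ (π ω') ≤ ω'.length := cs.length_wordProd_le ω'
  have h2 : ω'.length ≤ ω.length := hsub.length_le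
  have h3 : ℓ (π ω) = ω.length := hred
  rw [hπ'] at h1
  rw [hπ] at h3
  have : ω'.length = ω.length := by omega
  rw [← hπ', ← hπ, hsub.eq_of_length this]

lemma bruhatLE_subword {u w : W} (h : cs.bruhatLE u w) :
    ∀ ω, cs.IsReduced ω → π ω = w →
      ∃ σw, σw.Sublist ω ∧ cs.IsReduced σw ∧ π σw = u :=
  cle_subword cs ((bruhatLE_iff_cle cs u w).mp h)

omit [DecidableEq W] in
lemma left_up {u x : W} {i : B} (h : cs.bruhatLE u x) (hx : ℓ x < ℓ (σ i * x)) :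
    cs.bruhatLE u (σ i * x) ∧ cs.bruhatLE (σ i * u) (σ i * x) := by
  obtain ⟨ω, ω', hred, hπ, hsub, hπ'⟩ := h
  have hilen : ℓ (σ i * x) = ℓ x + 1 := by
    rcases cs.length_simple_mul x i with h1 | h1 <;> omega
  have hred2 : cs.IsReduced (i :: ω) := by
    show ℓ (π (i :: ω)) = (i :: ω).length
    rw [wordProd_cons, hπ, hilen]
    have : ℓ x = ω.length := by rw [← hπ]; exact hred
    simp [this]
  constructor
  · exact ⟨i :: ω, ω', hred2, by rw [wordProd_cons, hπ], hsub.cons i, hπ'⟩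
  · exact ⟨i :: ω, i :: ω', hred2, by rw [wordProd_cons, hπ], hsub.cons₂ i,
      by rw [wordProd_cons, hπ']⟩

lemma left_down {u x : W} {i : B} (h : cs.bruhatLE u (σ i * x)) (hx : ℓ x < ℓ (σ i * x)) :
    cs.bruhatLE u x ∨ cs.bruhatLE (σ i * u) x := by
  obtain ⟨ρ, hρr, hρp⟩ := cs.exists_reduced_word' x
  have hilen : ℓ (σ i * x) = ℓ x + 1 := by
    rcases cs.length_simple_mul x i with h1 | h1 <;> omega
  have hred2 : cs.IsReduced (i :: ρ) := by
    show ℓ (π (i :: ρ)) = (i :: ρ).length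
    rw [wordProd_cons, ← hρp, hilen]
    have : ℓ x = ρ.length := by rw [hρp]; exact hρr
    simp [this]
  have hπ2 : π (i :: ρ) = σ i * x := by rw [wordProd_cons, ← hρp]
  obtain ⟨σw, hsub, hsr, hsp⟩ := bruhatLE_subword cs h (i :: ρ) hred2 hπ2
  rcases List.sublist_cons_iff.mp hsub with hsub' | ⟨r, rfl, hr⟩
  · exact Or.inl ⟨ρ, σw, hρr, hρp.symm, hsub', hsp⟩
  · refine Or.inr ⟨ρ, r, hρr, hρp.symm, hr, ?_⟩
    rw [wordProd_cons] at hsp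
    rw [← hsp, cs.simple_mul_simple_cancel_left]

lemma unique_min_is_min {S : Set W} {m : W} (hm : cs.IsUniqueBruhatMin S m) :
    ∀ z ∈ S, cs.bruhatLE m z := by
  suffices H : ∀ n z, ℓ z ≤ n → z ∈ S → cs.bruhatLE m z by
    intro z hz
    exact H (ℓ z) z le_rfl hz
  intro n
  induction n using Nat.strong_induction_on with
  | _ n ih =>
  intro z hzn hz
  by_cases hmin : ∀ z' ∈ S, cs.bruhatLE z' z → z' = z
  · have : z = m := hm.2 z hz hmin
    rw [this]
    exact bruhatLE_refl cs m
  · push_neg at hmin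
    obtain ⟨z', hz'S, hz'le, hz'ne⟩ := hmin
    have hlt : ℓ z' < ℓ z := by
      have h1 := bruhatLE_length_le cs hz'le
      rcases Nat.lt_or_ge (ℓ z') (ℓ z) with h | h
      · exact h
      · exact absurd (bruhatLE_eq_of_length_ge cs hz'le h) hz'ne
    exact bruhatLE_trans cs (ih (ℓ z') (by omega) z' le_rfl hz'S) hz'le

end Parity

end CoxAux


/-- If `s x > x` then `(s x) ▷ y = min {s (x ▷ y), x ▷ y}` in the Bruhat order. -/
theorem tri_simple_mul {B W : Type*} [Group W] {M : CoxeterMatrix B} (cs : CoxeterSystem M W)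
    (tri : W → W → W)
    (htri : ∀ x y : W, cs.IsUniqueBruhatMin (cs.triSet x y) (tri x y))
    (i : B) (x y : W) (hx : cs.length x < cs.length (cs.simple i * x)) :
    (tri (cs.simple i * x) y = tri x y ∨
      tri (cs.simple i * x) y = cs.simple i * tri x y) ∧
    cs.bruhatLE (tri (cs.simple i * x) y) (tri x y) ∧
    cs.bruhatLE (tri (cs.simple i * x) y) (cs.simple i * tri x y) := by
  letI : DecidableEq W := Classical.decEq W
  obtain ⟨u₀, hu₀, hmeq⟩ := (htri x y).1.1
  -- both candidates lie in the big set
  have h1 : tri x y ∈ cs.triSet (cs.simple i * x) y :=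
    ⟨u₀, (CoxAux.left_up cs hu₀ hx).1, hmeq⟩
  have h2 : cs.simple i * tri x y ∈ cs.triSet (cs.simple i * x) y :=
    ⟨cs.simple i * u₀, (CoxAux.left_up cs hu₀ hx).2, by rw [hmeq, mul_assoc]⟩
  have hmin' := CoxAux.unique_min_is_min cs (htri (cs.simple i * x) y)
  have hminx := CoxAux.unique_min_is_min cs (htri x y)
  have g2 : cs.bruhatLE (tri (cs.simple i * x) y) (tri x y) := hmin' _ h1
  have g3 : cs.bruhatLE (tri (cs.simple i * x) y) (cs.simple i * tri x y) := hmin' _ h2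
  refine ⟨?_, g2, g3⟩
  obtain ⟨u, hu, hueq⟩ := (htri (cs.simple i * x) y).1.1
  rcases CoxAux.left_down cs hu hx with hux | hsux
  · left
    have hge : cs.bruhatLE (tri x y) (tri (cs.simple i * x) y) := hminx _ ⟨u, hux, hueq⟩
    exact CoxAux.bruhatLE_eq_of_length_ge cs g2 (CoxAux.bruhatLE_length_le cs hge)
  · have hmem : cs.simple i * tri (cs.simple i * x) y ∈ cs.triSet x y :=
      ⟨cs.simple i * u, hsux, by rw [hueq, mul_assoc]⟩
    have hble : cs.bruhatLE (tri x y) (cs.simple i * tri (cs.simple i * x) y) :=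
      hminx _ hmem
    by_cases heq : tri (cs.simple i * x) y = tri x y
    · exact Or.inl heq
    right
    -- length bookkeeping
    have l1 : cs.length (tri (cs.simple i * x) y) ≤ cs.length (tri x y) :=
      CoxAux.bruhatLE_length_le cs g2
    have l2 : cs.length (tri (cs.simple i * x) y) < cs.length (tri x y) := by
      rcases Nat.lt_or_ge (cs.length (tri (cs.simple i * x) y)) (cs.length (tri x y)) with h | h
      · exact h
      · exact absurd (CoxAux.bruhatLE_eq_of_length_ge cs g2 h) heq
    have l3 : cs.length (tri x y) ≤ cs.length (cs.simple i * tri (cs.simple i * x) y) :=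
      CoxAux.bruhatLE_length_le cs hble
    have l4 : cs.length (cs.simple i * tri (cs.simple i * x) y)
        ≤ cs.length (tri (cs.simple i * x) y) + 1 := by
      rcases cs.length_simple_mul (tri (cs.simple i * x) y) i with h | h <;> omega
    have l5 : cs.length (cs.simple i * tri (cs.simple i * x) y) ≤ cs.length (tri x y) := by
      omega
    have := CoxAux.bruhatLE_eq_of_length_ge cs hble l5
    -- tri x y = s * tri (s x) y
    rw [this, cs.simple_mul_simple_cancel_left]
end

section
/- If s is a simple reflection and a, b elements of a Coxeter group W with sa > a, then (sa) ∗ b = max{a ∗ b, s(a ∗ b)} in the Bruhat order. -/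
theorem bruhatLE_refl {B W : Type*} [Group W] {M : CoxeterMatrix B}
    (cs : CoxeterSystem M W) (x : W) : cs.bruhatLE x x := by
  obtain ⟨ω, hω, hx⟩ := cs.exists_reduced_word' x
  exact ⟨ω, ω, hω, hx.symm, List.Sublist.refl ω, hx.symm⟩

theorem bruhatLE_of_lt {B W : Type*} [Group W] {M : CoxeterMatrix B}
    (cs : CoxeterSystem M W) (i : B) (w : W)
    (h : cs.length w < cs.length (cs.simple i * w)) :
    cs.bruhatLE w (cs.simple i * w) := by
  obtain ⟨ω, hω, hx⟩ := cs.exists_reduced_word' w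
  have hlen : cs.length (cs.simple i * w) = cs.length w + 1 :=
    (cs.length_simple_mul w i).resolve_right (by omega)
  refine ⟨i :: ω, ω, ?_, ?_, List.sublist_cons_self i ω, hx.symm⟩
  · simp only [CoxeterSystem.IsReduced, cs.wordProd_cons, List.length_cons, ← hx]
    rw [hlen, hx, hω]
  · rw [cs.wordProd_cons, ← hx]

theorem bruhatLE_of_gt {B W : Type*} [Group W] {M : CoxeterMatrix B}
    (cs : CoxeterSystem M W) (i : B) (w : W)
    (h : cs.length (cs.simple i * w) < cs.length w) :
    cs.bruhatLE (cs.simple i * w) w := by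
  obtain ⟨ω, hω, hx⟩ := cs.exists_reduced_word' (cs.simple i * w)
  have hlen : cs.length w = cs.length (cs.simple i * w) + 1 := by
    have := cs.length_simple_mul w i
    omega
  have hprod : cs.wordProd (i :: ω) = w := by
    rw [cs.wordProd_cons, ← hx, ← mul_assoc, cs.simple_mul_simple_self, one_mul]
  refine ⟨i :: ω, ω, ?_, hprod, List.sublist_cons_self i ω, hx.symm⟩
  simp only [CoxeterSystem.IsReduced, hprod, List.length_cons]
  rw [hlen, hx, hω]

/-- If `s a > a` then `(s a) ∗ b = max {a ∗ b, s (a ∗ b)}` in the Bruhat order. -/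
theorem demazure_simple_mul {B W : Type*} [Group W] {M : CoxeterMatrix B} (cs : CoxeterSystem M W)
    (star : W → W → W)
    (hstar_one : ∀ w : W, star 1 w = w)
    (hstar_simple : ∀ (i : B) (w : W), star (cs.simple i) w =
      if cs.length w < cs.length (cs.simple i * w) then cs.simple i * w else w)
    (hstar_assoc : ∀ a b c : W, star (star a b) c = star a (star b c))
    (i : B) (a b : W) (ha : cs.length a < cs.length (cs.simple i * a)) :
    (star (cs.simple i * a) b = star a b ∨
      star (cs.simple i * a) b = cs.simple i * star a b) ∧
    cs.bruhatLE (star a b) (star (cs.simple i * a) b) ∧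
    cs.bruhatLE (cs.simple i * star a b) (star (cs.simple i * a) b) := by
  have hsa : star (cs.simple i) a = cs.simple i * a := by
    rw [hstar_simple]; simp [ha]
  have key : star (cs.simple i * a) b = star (cs.simple i) (star a b) := by
    rw [← hsa, hstar_assoc]
  set u := star a b with hu
  rw [hstar_simple] at key
  by_cases h : cs.length u < cs.length (cs.simple i * u)
  · rw [if_pos h] at key
    refine ⟨Or.inr key, ?_, ?_⟩
    · rw [key]; exact bruhatLE_of_lt cs i u h
    · rw [key]; exact bruhatLE_refl cs _
  · rw [if_neg h] at key
    have h' : cs.length (cs.simple i * u) < cs.length u := by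
      have := cs.length_simple_mul u i
      omega
    refine ⟨Or.inl key, ?_, ?_⟩
    · rw [key]; exact bruhatLE_refl cs u
    · rw [key]; exact bruhatLE_of_gt cs i u h'
end
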